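/- arXiv:2104.09110 — 5 statements merged into one kernel-verified Lean document; each statement's English description precedes it below -/
import Mathlib

section
/- Let J be a Euclidean Jordan algebra, c = (c₁,…,c_k) a complete system of orthogonal idempotents, and J(c) the associated subalgebra. Then the set of invertible elements of J(c) equals J(c) ∩ J^×, i.e. an element of J(c) is invertible in J(c) if and only if it is invertible in J. -/
open scoped RealInnerProductSpace

/-- A Euclidean Jordan algebra structure on a finite-dimensional real inner
product space: a commutative bilinear product satisfying the Jordan identity,
with unit `one`, such that the inner product is associative. -/
structure EJA (J : Type) [NormedAddCommGroup J] [InnerProductSpace ℝ J] : Type where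
  mul : J →ₗ[ℝ] J →ₗ[ℝ] J
  comm : ∀ x y : J, mul x y = mul y x
  jordan : ∀ x y : J, mul (mul x y) (mul x x) = mul x (mul y (mul x x))
  one : J
  one_mul : ∀ x : J, mul one x = x
  assoc_inner : ∀ x y z : J, ⟪mul x y, z⟫ = ⟪y, mul x z⟫

variable {J : Type} [NormedAddCommGroup J] [InnerProductSpace ℝ J] [FiniteDimensional ℝ J]

/-- The Peirce `μ`-eigenspace of the idempotent `c`. -/
noncomputable def EJA.peirce (A : EJA J) (c : J) (μ : ℝ) : Submodule ℝ J :=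
  Module.End.eigenspace (A.mul c : Module.End ℝ J) μ

/-- A complete system of orthogonal idempotents. -/
def EJA.IsCSOI (A : EJA J) {k : ℕ} (c : Fin k → J) : Prop :=
  (∀ j, A.mul (c j) (c j) = c j) ∧ (∀ i j, i ≠ j → A.mul (c i) (c j) = 0) ∧
    (∑ j, c j) = A.one

/-- `y` is the Jordan inverse of `x`:  `x∘y = e` and `x²∘y = x`. -/
def EJA.IsInv (A : EJA J) (x y : J) : Prop :=
  A.mul x y = A.one ∧ A.mul (A.mul x x) y = x

/-- Linearized Jordan identity. -/
theorem EJA.lin (A : EJA J) (x y z : J) :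
    A.mul (A.mul z y) (A.mul x x) + (2:ℝ) • A.mul (A.mul x y) (A.mul x z)
      = A.mul z (A.mul y (A.mul x x)) + (2:ℝ) • A.mul x (A.mul y (A.mul x z)) := by
  have h1 := A.jordan (x + z) y
  have h2 := A.jordan (x - z) y
  have h4 := A.jordan z y
  simp only [map_add, map_sub, LinearMap.add_apply, LinearMap.sub_apply] at h1 h2
  rw [A.comm z x] at h1 h2
  linear_combination (norm := module) ((2:ℝ)⁻¹ • h1) - ((2:ℝ)⁻¹ • h2) - h4

theorem EJA.mem_peirce_one (A : EJA J) {d v : J} :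
    v ∈ A.peirce d 1 ↔ A.mul d v = v := by
  rw [EJA.peirce, Module.End.mem_eigenspace_iff, one_smul]

/-- Peirce rule: the 1-eigenspace of an idempotent is closed under multiplication. -/
theorem EJA.peirce_one_mul (A : EJA J) {d a b : J} (hd : A.mul d d = d)
    (ha : A.mul d a = a) (hb : A.mul d b = b) :
    A.mul d (A.mul a b) = A.mul a b := by
  have h := A.lin d b a
  rw [hd, hb, ha, A.comm b a, A.comm b d, hb, A.comm (A.mul a b) d] at h
  linear_combination (norm := module) -h

/-- If `d, f` are orthogonal idempotents, the 1-eigenspace of `d` is killed by `f`. -/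
theorem EJA.orth_kill (A : EJA J) {d f a : J} (hd : A.mul d d = d) (hf : A.mul f f = f)
    (hdf : A.mul d f = 0) (ha : A.mul d a = a) : A.mul f a = 0 := by
  have hfd : A.mul f d = 0 := by rw [A.comm f d, hdf]
  have h2 := A.lin d f a
  rw [hd, hdf, ha, hfd, A.comm a f, A.comm (A.mul f a) d] at h2
  simp only [map_zero, LinearMap.zero_apply, smul_zero, add_zero, zero_add] at h2
  have s2 : A.mul d (A.mul f a) = 0 := by linear_combination (norm := module) -h2
  have h1 := A.lin f d a
  rw [hf, hfd, hdf, A.comm a d, ha, s2, map_zero] at h1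
  simp only [map_zero, LinearMap.zero_apply, smul_zero, add_zero, zero_add] at h1
  rw [A.comm f a]
  exact h1

/-- Peirce rule: `J(d,0) ∘ J(d,1) = 0`. -/
theorem EJA.zero_one_mul (A : EJA J) {d a b : J} (hd : A.mul d d = d)
    (ha : A.mul d a = 0) (hb : A.mul d b = b) : A.mul a b = 0 := by
  have g1 := A.lin d a b
  rw [hd, ha, hb, A.comm a d, ha, A.comm b a, A.comm (A.mul a b) d] at g1
  simp only [map_zero, LinearMap.zero_apply, smul_zero, add_zero, zero_add] at g1
  have s3 : A.mul d (A.mul a b) = 0 := by linear_combination (norm := module) -g1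
  have g2 := A.lin d b a
  rw [hd, hb, ha, A.comm b d, hb, A.comm (A.mul a b) d, s3] at g2
  simp only [map_zero, LinearMap.zero_apply, smul_zero, add_zero, zero_add] at g2
  exact g2.symm

/-- An element of the subalgebra `J(c)` associated to a CSOI is invertible in
`J(c)` (whose unit is `e`) iff it is invertible in `J`. -/
theorem stmt2 (A : EJA J) (k : ℕ) (c : Fin k → J) (hc : A.IsCSOI c)
    (x : J) (hx : x ∈ ⨆ j, A.peirce (c j) 1) :
    (∃ y ∈ ⨆ j, A.peirce (c j) 1, A.IsInv x y) ↔ (∃ y, A.IsInv x y) := by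
  obtain ⟨hid, horth, hsum⟩ := hc
  set V : Submodule ℝ J := ⨆ j, A.peirce (c j) 1 with hVdef
  have hcV : ∀ j, c j ∈ A.peirce (c j) 1 := fun j => A.mem_peirce_one.mpr (hid j)
  have honeV : A.one ∈ V := by
    rw [← hsum]
    exact sum_mem fun j _ => Submodule.mem_iSup_of_mem j (hcV j)
  -- V is closed under multiplication
  have hmul : ∀ a ∈ V, ∀ b ∈ V, A.mul a b ∈ V := by
    intro a ha
    refine Submodule.iSup_induction (motive := fun a => ∀ b ∈ V, A.mul a b ∈ V)
      (p := fun j => A.peirce (c j) 1) ha ?_ ?_ ?_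
    · intro i a hai b hb
      refine Submodule.iSup_induction (motive := fun b => A.mul a b ∈ V)
        (p := fun j => A.peirce (c j) 1) hb ?_ ?_ ?_
      · intro j b hbj
        rw [A.mem_peirce_one] at hai hbj
        by_cases hij : i = j
        · subst hij
          exact Submodule.mem_iSup_of_mem i
            (A.mem_peirce_one.mpr (A.peirce_one_mul (hid i) hai hbj))
        · have h1 : A.mul (c i) b = 0 :=
            A.orth_kill (hid j) (hid i) (horth j i (Ne.symm hij)) hbj
          have h2 : A.mul b a = 0 := A.zero_one_mul (hid i) h1 hai
          rw [A.comm a b, h2]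
          exact zero_mem V
      · simp only [map_zero]
        exact zero_mem V
      · intro u v hu hv
        rw [map_add]
        exact add_mem hu hv
    · intro b hb
      simp only [map_zero, LinearMap.zero_apply]
      exact zero_mem V
    · intro u v hu hv b hb
      rw [map_add, LinearMap.add_apply]
      exact add_mem (hu b hb) (hv b hb)
  -- multiplication by elements of V preserves Vᗮ
  have hperp : ∀ w ∈ V, ∀ u ∈ Vᗮ, A.mul w u ∈ Vᗮ := by
    intro w hw u hu
    rw [Submodule.mem_orthogonal]
    intro v hv
    rw [real_inner_comm, A.assoc_inner, real_inner_comm]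
    exact hu (A.mul w v) (hmul w hw v hv)
  constructor
  · rintro ⟨y, -, hy⟩; exact ⟨y, hy⟩
  · rintro ⟨y, hy1, hy2⟩
    set y₁ : J := (V.orthogonalProjectionOnto y : J) with hy₁def
    have hy₁V : y₁ ∈ V := SetLike.coe_mem _
    have hy₂V : y - y₁ ∈ Vᗮ := Submodule.sub_starProjection_mem_orthogonal (K := V) y
    have hysplit : y = y₁ + (y - y₁) := by abel
    refine ⟨y₁, hy₁V, ?_, ?_⟩
    · -- A.mul x y₁ = A.one
      have e1 : A.mul x y₁ + A.mul x (y - y₁) = A.one := by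
        rw [← map_add, ← hysplit]; exact hy1
      have m1 : A.mul x (y - y₁) ∈ V := by
        rw [eq_sub_of_add_eq' e1]
        exact sub_mem honeV (hmul x hx y₁ hy₁V)
      have m2 : A.mul x (y - y₁) ∈ Vᗮ := hperp x hx _ hy₂V
      have z0 : A.mul x (y - y₁) = 0 := by
        have := (V.orthogonal_disjoint).le_bot (Submodule.mem_inf.mpr ⟨m1, m2⟩)
        simpa using this
      rw [z0, add_zero] at e1
      exact e1
    · -- A.mul (A.mul x x) y₁ = x
      have hxx : A.mul x x ∈ V := hmul x hx x hx
      have e1 : A.mul (A.mul x x) y₁ + A.mul (A.mul x x) (y - y₁) = x := by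
        rw [← map_add, ← hysplit]; exact hy2
      have m1 : A.mul (A.mul x x) (y - y₁) ∈ V := by
        rw [eq_sub_of_add_eq' e1]
        exact sub_mem hx (hmul _ hxx y₁ hy₁V)
      have m2 : A.mul (A.mul x x) (y - y₁) ∈ Vᗮ := hperp _ hxx _ hy₂V
      have z0 : A.mul (A.mul x x) (y - y₁) = 0 := by
        have := (V.orthogonal_disjoint).le_bot (Submodule.mem_inf.mpr ⟨m1, m2⟩)
        simpa using this
      rw [z0, add_zero] at e1
      exact e1
end

section
/- Let J be a Euclidean Jordan algebra and c a CSOI. The subgroup Str(c) = {ℓ ∈ Str(J) : ℓ(J(c)) = J(c)} of the structure group is stable under the Cartan involution ℓ ↦ (ℓᵗ)⁻¹. -/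
set_option linter.unusedSectionVars false
set_option maxHeartbeats 1000000


open scoped RealInnerProductSpace

variable {J : Type} [NormedAddCommGroup J] [InnerProductSpace ℝ J] [FiniteDimensional ℝ J]

/-- `ℓ` belongs to the structure group: it preserves invertible elements and
`(ℓx)⁻¹ = (ℓᵗ)⁻¹ x⁻¹` (here `(ℓᵗ)⁻¹ = (ℓ⁻¹)ᵗ` is the adjoint of `ℓ⁻¹`). -/
def EJA.InStr (A : EJA J) (ℓ : J ≃ₗ[ℝ] J) : Prop :=
  ∀ x y : J, A.IsInv x y →
    A.IsInv (ℓ x) (LinearMap.adjoint ℓ.symm.toLinearMap y)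

namespace EJA
variable (A : EJA J)

/-- `L x` as an endomorphism. -/
def L (x : J) : Module.End ℝ J := A.mul x

@[simp] lemma L_apply (x z : J) : A.L x z = A.mul x z := rfl

lemma mul_one' (x : J) : A.mul x A.one = x := by rw [A.comm]; exact A.one_mul x

lemma jordan_pt (x z : J) :
    A.mul (A.mul x x) (A.mul x z) = A.mul x (A.mul (A.mul x x) z) := by
  rw [A.comm (A.mul x x) (A.mul x z), A.comm (A.mul x x) z]
  exact A.jordan x z

lemma lin_pt (a b z : J) :
    (2:ℝ) • A.mul (A.mul a b) (A.mul a z) + A.mul (A.mul a a) (A.mul b z)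
      = (2:ℝ) • A.mul a (A.mul (A.mul a b) z) + A.mul b (A.mul (A.mul a a) z) := by
  have hp := A.jordan_pt (a + b) z
  have hm := A.jordan_pt (a - b) z
  have hb := A.jordan_pt b z
  simp only [map_add, map_sub, LinearMap.add_apply, LinearMap.sub_apply] at hp hm
  have hab : A.mul b a = A.mul a b := A.comm b a
  rw [hab] at hp hm
  linear_combination (norm := module) ((2:ℝ)⁻¹ : ℝ) • hp - ((2:ℝ)⁻¹ : ℝ) • hm - hb

/-- Jordan identity, operator form: `L x²` commutes with `L x`. -/
lemma commute_L_sq (x : J) : Commute (A.L (A.mul x x)) (A.L x) := by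
  refine LinearMap.ext fun z => ?_
  exact A.jordan_pt x z

/-- self-adjointness of `L x`. -/
lemma L_adjoint (x : J) : LinearMap.adjoint (A.L x) = A.L x := by
  symm
  rw [LinearMap.eq_adjoint_iff]
  intro u v
  simpa using A.assoc_inner x u v

/-- If `x∘y = e` then `L x²` commutes with `L y`. -/
lemma commute_sq_other {x y : J} (h : A.mul x y = A.one) :
    Commute (A.L (A.mul x x)) (A.L y) := by
  refine LinearMap.ext fun z => ?_
  have := A.lin_pt x y z
  rw [h] at this
  simp only [A.one_mul] at this
  have h2 : (2:ℝ) • A.mul x z + A.mul (A.mul x x) (A.mul y z)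
      = (2:ℝ) • A.mul x z + A.mul y (A.mul (A.mul x x) z) := this
  have := add_left_cancel h2
  simpa using this

/-- skew-adjoint trace lemma : tr(fᵗ f) = 0 → f = 0 -/
lemma eq_zero_of_trace_adjoint_comp (f : J →ₗ[ℝ] J)
    (h : LinearMap.trace ℝ J (LinearMap.adjoint f ∘ₗ f) = 0) : f = 0 := by
  let b := stdOrthonormalBasis ℝ J
  have ht : LinearMap.trace ℝ J (LinearMap.adjoint f ∘ₗ f)
      = ∑ i, ⟪f (b i), f (b i)⟫ := by
    rw [LinearMap.trace_eq_matrix_trace ℝ b.toBasis, Matrix.trace]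
    congr 1
    ext i
    rw [Matrix.diag_apply, LinearMap.toMatrix_apply, OrthonormalBasis.coe_toBasis,
      OrthonormalBasis.coe_toBasis_repr_apply, OrthonormalBasis.repr_apply_apply,
      LinearMap.comp_apply, LinearMap.adjoint_inner_right]
  rw [ht] at h
  have hz : ∀ i, f (b i) = 0 := by
    intro i
    have hnn : ∀ i ∈ Finset.univ, (0:ℝ) ≤ ⟪f (b i), f (b i)⟫ := fun i _ => real_inner_self_nonneg
    have := (Finset.sum_eq_zero_iff_of_nonneg hnn).mp h i (Finset.mem_univ i)
    exact inner_self_eq_zero.mp this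
  apply b.toBasis.ext
  intro i
  simp [hz i]


variable {J : Type} [NormedAddCommGroup J] [InnerProductSpace ℝ J] [FiniteDimensional ℝ J]

/-- abstract trace argument -/
lemma trace_DD_zero (S T P Q : Module.End ℝ J)
    (hSP : Commute S P) (hSQ : Commute S Q)
    (hST : S * T - T * S = (2:ℝ) • (P * Q - Q * P)) :
    LinearMap.trace ℝ J ((P * Q - Q * P) * (P * Q - Q * P)) = 0 := by
  set D := P * Q - Q * P with hD
  have hSD : Commute S D := (hSP.mul_right hSQ).sub_right (hSQ.mul_right hSP)
  have e1 : LinearMap.trace ℝ J (S * T * D) = LinearMap.trace ℝ J (T * S * D) := by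
    rw [mul_assoc, LinearMap.trace_mul_comm ℝ S (T * D), mul_assoc, hSD.symm.eq,
      ← mul_assoc]
  have e2 : LinearMap.trace ℝ J ((S * T - T * S) * D) = 0 := by
    rw [sub_mul, map_sub, e1, sub_self]
  rw [hST, smul_mul_assoc, map_smul, smul_eq_mul] at e2
  linarith

variable (A : EJA J)

lemma commute_L_of_inv {x y : J} (h1 : A.mul x y = A.one)
    (h2 : A.mul (A.mul x x) y = x) : Commute (A.L x) (A.L y) := by
  have hSA : Commute (A.L (A.mul x x)) (A.L x) := A.commute_L_sq x
  have hSB : Commute (A.L (A.mul x x)) (A.L y) := A.commute_sq_other h1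
  have hD : A.L (A.mul x x) * A.L (A.mul y y) - A.L (A.mul y y) * A.L (A.mul x x)
      = (2:ℝ) • (A.L x * A.L y - A.L y * A.L x) := by
    refine LinearMap.ext fun z => ?_
    have hl := A.lin_pt y (A.mul x x) z
    have hyx : A.mul y (A.mul x x) = x := by rw [A.comm]; exact h2
    rw [hyx] at hl
    simp only [LinearMap.sub_apply, LinearMap.smul_apply, Module.End.mul_apply, L_apply]
    linear_combination (norm := module) -hl
  have htr := trace_DD_zero (A.L (A.mul x x)) (A.L (A.mul y y)) (A.L x) (A.L y)
    hSA hSB hD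
  have hadj : LinearMap.adjoint (A.L x * A.L y - A.L y * A.L x)
      = -(A.L x * A.L y - A.L y * A.L x) := by
    have h3 : A.L x * A.L y - A.L y * A.L x = (A.L x ∘ₗ A.L y) - (A.L y ∘ₗ A.L x) := rfl
    rw [h3, map_sub, LinearMap.adjoint_comp, LinearMap.adjoint_comp, A.L_adjoint,
      A.L_adjoint]
    ext z
    simp [Module.End.mul_apply]
  have hD0 : A.L x * A.L y - A.L y * A.L x = 0 := by
    apply eq_zero_of_trace_adjoint_comp
    rw [hadj]
    have h4 : (-(A.L x * A.L y - A.L y * A.L x)) ∘ₗ (A.L x * A.L y - A.L y * A.L x)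
        = -((A.L x * A.L y - A.L y * A.L x) * (A.L x * A.L y - A.L y * A.L x)) := by
      ext z; simp [Module.End.mul_apply]
    rw [h4, map_neg, htr, neg_zero]
  exact sub_eq_zero.mp hD0

/-- pointwise version -/
lemma mul_comm_of_inv {x y : J} (h1 : A.mul x y = A.one)
    (h2 : A.mul (A.mul x x) y = x) (z : J) :
    A.mul x (A.mul y z) = A.mul y (A.mul x z) := by
  have := A.commute_L_of_inv h1 h2
  exact congrFun (congrArg (fun f : Module.End ℝ J => (f : J → J)) this.eq) z


variable (A : EJA J)

lemma isInv_symm {x y : J} (h : A.IsInv x y) : A.IsInv y x := by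
  constructor
  · rw [A.comm]; exact h.1
  · rw [A.comm]
    calc A.mul x (A.mul y y) = A.mul y (A.mul x y) := A.mul_comm_of_inv h.1 h.2 y
      _ = y := by rw [h.1, A.mul_one']

lemma isInv_unique {x y y' : J} (h : A.IsInv x y) (h' : A.IsInv x y') : y = y' := by
  calc y = A.mul y A.one := (A.mul_one' y).symm
    _ = A.mul y (A.mul x y') := by rw [h'.1]
    _ = A.mul x (A.mul y y') := (A.mul_comm_of_inv h.1 h.2 y').symm
    _ = A.mul x (A.mul y' y) := by rw [A.comm y y']
    _ = A.mul y' (A.mul x y) := A.mul_comm_of_inv h'.1 h'.2 y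
    _ = A.mul y' A.one := by rw [h.1]
    _ = y' := A.mul_one' y'

lemma commute_of_eig1 {c a : J} (hc : A.mul c c = c) (ha : A.mul c a = a) (z : J) :
    A.mul c (A.mul a z) = A.mul a (A.mul c z) := by
  have hl := A.lin_pt c a z
  rw [ha, hc] at hl
  linear_combination (norm := module) -hl

lemma commute_of_eig0 {c b : J} (hc : A.mul c c = c) (hb : A.mul c b = 0) (z : J) :
    A.mul c (A.mul b z) = A.mul b (A.mul c z) := by
  have hl := A.lin_pt c b z
  rw [hb, hc] at hl
  simp only [map_zero, LinearMap.zero_apply, smul_zero, zero_add, add_zero] at hl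
  exact hl

lemma idem_cubic {c : J} (hc : A.mul c c = c) (w : J) :
    (3:ℝ) • A.mul c (A.mul c w) = (2:ℝ) • A.mul c (A.mul c (A.mul c w)) + A.mul c w := by
  have hl := A.lin_pt c w c
  rw [hc] at hl
  rw [hc] at hl
  rw [A.comm (A.mul c w) c, A.comm w c] at hl
  linear_combination (norm := module) hl

/-- orthogonal idempotents: `J₁(d) ⊆ J₀(c)`. -/
lemma orth_idem_ann {c d b : J} (hc : A.mul c c = c) (hd : A.mul d d = d)
    (hcd : A.mul c d = 0) (hb : A.mul d b = b) : A.mul c b = 0 := by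
  have hcomm : ∀ z, A.mul c (A.mul d z) = A.mul d (A.mul c z) :=
    fun z => A.commute_of_eig0 hc hcd z
  have h1 : A.mul d (A.mul c b) = A.mul c b := by rw [← hcomm b, hb]
  have h2 : A.mul d (A.mul c (A.mul c b)) = A.mul c (A.mul c b) := by
    rw [← hcomm (A.mul c b), h1]
  have hdc : A.mul d c = 0 := by rw [A.comm]; exact hcd
  have hsum : A.mul (c + d) (c + d) = c + d := by
    simp only [map_add, LinearMap.add_apply, hc, hd, hcd, hdc, add_zero, zero_add]
  have cubc := A.idem_cubic hc b
  have cubcd := A.idem_cubic hsum b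
  simp only [map_add, LinearMap.add_apply] at cubcd
  simp only [hb, h1, h2] at cubcd
  have hv : A.mul c (A.mul c b) = 0 := by
    have h6 : (6:ℝ) • A.mul c (A.mul c b) = 0 := by
      linear_combination (norm := module) cubc - cubcd
    have := smul_eq_zero.mp h6
    rcases this with h | h
    · norm_num at h
    · exact h
  have hw : A.mul c (A.mul c (A.mul c b)) = 0 := by rw [hv, map_zero]
  have := cubc
  rw [hw, hv] at this
  simp only [smul_zero, zero_add] at this
  exact this.symm


variable {J : Type} [NormedAddCommGroup J] [InnerProductSpace ℝ J] [FiniteDimensional ℝ J]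
variable (A : EJA J)

lemma mem_peirce_one_s3 {c x : J} : x ∈ A.peirce c 1 ↔ A.mul c x = x := by
  rw [peirce, Module.End.mem_eigenspace_iff, one_smul]

section csoi
variable {k : ℕ} {c : Fin k → J} (hc : A.IsCSOI c)

local notation "V" => ⨆ j, A.peirce (c j) 1

include hc

lemma one_mem_V : A.one ∈ V := by
  rw [← hc.2.2]
  refine Submodule.sum_mem _ fun j _ => ?_
  exact Submodule.mem_iSup_of_mem j (A.mem_peirce_one_s3.mpr (hc.1 j))

lemma gen_ann {i j : Fin k} (hij : i ≠ j) {a b : J}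
    (ha : A.mul (c i) a = a) (hb : A.mul (c j) b = b) : A.mul a b = 0 := by
  have hann : ∀ l, A.mul (c l) (A.mul a b) = 0 := by
    intro l
    by_cases hlj : l = j
    · subst hlj
      have hla : A.mul (c l) a = 0 :=
        A.orth_idem_ann (hc.1 l) (hc.1 i) (hc.2.1 l i (Ne.symm hij)) ha
      calc A.mul (c l) (A.mul a b) = A.mul (c l) (A.mul b a) := by rw [A.comm a b]
        _ = A.mul b (A.mul (c l) a) := A.commute_of_eig1 (hc.1 l) hb a
        _ = 0 := by rw [hla, map_zero]
    · have hlb : A.mul (c l) b = 0 :=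
        A.orth_idem_ann (hc.1 l) (hc.1 j) (hc.2.1 l j hlj) hb
      by_cases hli : l = i
      · subst hli
        calc A.mul (c l) (A.mul a b) = A.mul a (A.mul (c l) b) :=
              A.commute_of_eig1 (hc.1 l) ha b
          _ = 0 := by rw [hlb, map_zero]
      · have hla : A.mul (c l) a = 0 :=
          A.orth_idem_ann (hc.1 l) (hc.1 i) (hc.2.1 l i hli) ha
        calc A.mul (c l) (A.mul a b) = A.mul a (A.mul (c l) b) :=
              A.commute_of_eig0 (hc.1 l) hla b
          _ = 0 := by rw [hlb, map_zero]
  have h2 : A.mul A.one (A.mul a b) = 0 := by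
    rw [← hc.2.2]
    have h3 : A.mul (∑ l, c l) (A.mul a b) = ∑ l, A.mul (c l) (A.mul a b) := by
      rw [map_sum]; simp [LinearMap.sum_apply]
    rw [h3]
    exact Finset.sum_eq_zero fun l _ => hann l
  rw [A.one_mul] at h2
  exact h2

lemma mul_mem_V {x y : J} (hx : x ∈ V) (hy : y ∈ V) : A.mul x y ∈ V := by
  have hgen : ∀ i (a : J), a ∈ A.peirce (c i) 1 → A.mul a y ∈ V := by
    intro i a ha
    refine Submodule.iSup_induction (motive := fun y => A.mul a y ∈ V) _ hy ?_ ?_ ?_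
    · intro j b hb
      by_cases hij : i = j
      · subst hij
        refine Submodule.mem_iSup_of_mem i (A.mem_peirce_one_s3.mpr ?_)
        rw [A.commute_of_eig1 (hc.1 i) (A.mem_peirce_one_s3.mp ha) b,
          A.mem_peirce_one_s3.mp hb]
      · rw [A.gen_ann hc hij (A.mem_peirce_one_s3.mp ha) (A.mem_peirce_one_s3.mp hb)]
        exact Submodule.zero_mem _
    · show A.mul a (0:J) ∈ V
      rw [map_zero]; exact Submodule.zero_mem _
    · intro u v hu hv
      show A.mul a (u + v) ∈ V
      rw [map_add]; exact Submodule.add_mem _ hu hv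
  refine Submodule.iSup_induction (motive := fun x => A.mul x y ∈ V) _ hx ?_ ?_ ?_
  · exact fun i a ha => hgen i a ha
  · show A.mul (0:J) y ∈ V
    have : A.mul (0:J) y = 0 := by simp
    rw [this]; exact Submodule.zero_mem _
  · intro u v hu hv
    show A.mul (u + v) y ∈ V
    have : A.mul (u + v) y = A.mul u y + A.mul v y := by simp [map_add]
    rw [this]; exact Submodule.add_mem _ hu hv

lemma mul_mem_orth {x u : J} (hx : x ∈ V) (hu : u ∈ (V : Submodule ℝ J)ᗮ) :
    A.mul x u ∈ (V : Submodule ℝ J)ᗮ := by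
  rw [Submodule.mem_orthogonal] at hu ⊢
  intro w hw
  rw [real_inner_comm]
  have h1 : ⟪A.mul x u, w⟫ = ⟪u, A.mul x w⟫ := A.assoc_inner x u w
  rw [h1, real_inner_comm]
  exact hu _ (A.mul_mem_V hc hx hw)

lemma inv_mem_V {x y : J} (hx : x ∈ V) (hxy : A.IsInv x y) : y ∈ V := by
  obtain ⟨y₀, hy₀, y₁, hy₁, hdec⟩ :=
    Submodule.exists_add_mem_mem_orthogonal (K := (V : Submodule ℝ J)) y
  have hx2 : A.mul x x ∈ V := A.mul_mem_V hc hx hx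
  have key : ∀ z : J, z ∈ V → A.mul z y₁ ∈ V → A.mul z y₁ = 0 := by
    intro z hz hmem
    exact (Submodule.disjoint_def.mp (Submodule.orthogonal_disjoint _)) _
      hmem (A.mul_mem_orth hc hz hy₁)
  have e1 : A.mul x y₀ + A.mul x y₁ = A.one := by
    rw [← map_add, ← hdec]; exact hxy.1
  have e2 : A.mul (A.mul x x) y₀ + A.mul (A.mul x x) y₁ = x := by
    rw [← map_add, ← hdec]; exact hxy.2
  have hx1 : A.mul x y₁ = 0 := by
    apply key x hx
    rw [eq_sub_of_add_eq' e1]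
    exact Submodule.sub_mem _ (A.one_mem_V hc) (A.mul_mem_V hc hx hy₀)
  have hx21 : A.mul (A.mul x x) y₁ = 0 := by
    apply key _ hx2
    rw [eq_sub_of_add_eq' e2]
    exact Submodule.sub_mem _ hx (A.mul_mem_V hc hx2 hy₀)
  have hinv0 : A.IsInv x y₀ := by
    rw [hx1, add_zero] at e1
    rw [hx21, add_zero] at e2
    exact ⟨e1, e2⟩
  rw [A.isInv_unique hxy hinv0]
  exact hy₀

end csoi

lemma isInv_of_L_bijective {x : J} (h : Function.Bijective (A.L x)) :
    ∃ y, A.IsInv x y := by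
  obtain ⟨y, hy⟩ := h.2 A.one
  have hy' : A.mul x y = A.one := hy
  refine ⟨y, hy', ?_⟩
  apply h.1
  show A.L x (A.mul (A.mul x x) y) = A.L x x
  have hcom := A.commute_L_sq x
  have h5 : A.L x (A.L (A.mul x x) y) = A.L (A.mul x x) (A.L x y) :=
    congrFun (congrArg (fun f : Module.End ℝ J => (f : J → J)) hcom.symm.eq) y
  simp only [L_apply] at h5 ⊢
  rw [h5, hy', A.mul_one']

lemma exists_invertible_translate (a : J) :
    ∃ t : ℝ, t ≠ 0 ∧ ∃ y, A.IsInv (t • A.one - a) y := by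
  have hfin : (insert (0:ℝ) {μ | (A.L a).HasEigenvalue μ}).Finite :=
    Set.Finite.insert _ (Module.End.finite_hasEigenvalue (A.L a))
  obtain ⟨t, ht⟩ := (Set.Finite.infinite_compl hfin).nonempty
  rw [Set.mem_compl_iff, Set.mem_insert_iff] at ht
  push_neg at ht
  refine ⟨t, ht.1, ?_⟩
  apply A.isInv_of_L_bijective
  have hinj : Function.Injective (A.L (t • A.one - a)) := by
    intro v w hvw
    by_contra hne
    apply ht.2
    refine Module.End.hasEigenvalue_of_hasEigenvector
      (x := v - w) ⟨Module.End.mem_eigenspace_iff.mpr ?_, sub_ne_zero.mpr hne⟩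
    have hvw' : A.mul (t • A.one - a) v = A.mul (t • A.one - a) w := hvw
    have hexp : ∀ z : J, A.mul (t • A.one - a) z = t • z - A.mul a z := by
      intro z
      rw [map_sub, map_smul]
      simp only [LinearMap.sub_apply, LinearMap.smul_apply, A.one_mul]
    rw [hexp v, hexp w] at hvw'
    have : A.mul a (v - w) = t • (v - w) := by
      rw [map_sub, smul_sub]
      linear_combination (norm := module) -hvw'
    exact this
  exact ⟨hinj, LinearMap.injective_iff_surjective.mp hinj⟩


variable {J : Type} [NormedAddCommGroup J] [InnerProductSpace ℝ J] [FiniteDimensional ℝ J]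
variable (A : EJA J)

lemma isInv_smul_one {t : ℝ} (ht : t ≠ 0) : A.IsInv (t • A.one) (t⁻¹ • A.one) := by
  constructor
  · simp only [map_smul, LinearMap.smul_apply, smul_smul, A.one_mul]
    rw [show t⁻¹ * t = 1 from inv_mul_cancel₀ ht, one_smul]
  · simp only [map_smul, LinearMap.smul_apply, smul_smul, A.one_mul]
    rw [show t⁻¹ * (t * t) = t from by field_simp]


end EJA

/-- `Str(c)` is stable under the Cartan involution `ℓ ↦ (ℓᵗ)⁻¹`: if `ℓ` is in
the structure group and preserves `J(c)`, then so does `m = (ℓᵗ)⁻¹`. -/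
theorem stmt3 (A : EJA J) (k : ℕ) (c : Fin k → J) (hc : A.IsCSOI c)
    (ℓ : J ≃ₗ[ℝ] J) (hℓ : A.InStr ℓ)
    (hmap : (⨆ j, A.peirce (c j) 1).map ℓ.toLinearMap = ⨆ j, A.peirce (c j) 1)
    (m : J ≃ₗ[ℝ] J) (hm : m.toLinearMap = LinearMap.adjoint ℓ.symm.toLinearMap) :
    A.InStr m ∧ (⨆ j, A.peirce (c j) 1).map m.toLinearMap = ⨆ j, A.peirce (c j) 1 := by
  have hmpt : ∀ z : J, LinearMap.adjoint ℓ.symm.toLinearMap z = m z := by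
    intro z; rw [← hm]; rfl
  -- adjoint of m.symm is ℓ
  have hadj : ∀ z : J, LinearMap.adjoint m.symm.toLinearMap z = ℓ z := by
    have h1 : m.symm.toLinearMap ∘ₗ m.toLinearMap = LinearMap.id := by
      ext z; simp
    have h2 := congrArg (fun f : J →ₗ[ℝ] J => LinearMap.adjoint f) h1
    have hid : LinearMap.adjoint (LinearMap.id : J →ₗ[ℝ] J) = LinearMap.id := by
      symm
      rw [LinearMap.eq_adjoint_iff]
      intro x y
      rfl
    simp only [LinearMap.adjoint_comp, hid, hm, LinearMap.adjoint_adjoint] at h2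
    intro z
    have h3 := congrArg (fun f : J →ₗ[ℝ] J => f z) h2
    simp only [LinearMap.comp_apply, LinearMap.id_apply] at h3
    have h4 : ℓ.symm (LinearMap.adjoint m.symm.toLinearMap z) = z := h3
    rw [LinearEquiv.symm_apply_eq] at h4
    rw [h4]
  constructor
  · intro x y hxy
    rw [hadj y]
    have h1 := A.isInv_symm hxy
    have h2 := hℓ y x h1
    rw [hmpt x] at h2
    exact A.isInv_symm h2
  · -- m maps V into V
    have hV : ∀ v : J, v ∈ (⨆ j, A.peirce (c j) 1) → (∃ w, A.IsInv v w) →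
        m v ∈ (⨆ j, A.peirce (c j) 1) := by
      rintro v hv ⟨w, hvw⟩
      have hw : w ∈ ⨆ j, A.peirce (c j) 1 := A.inv_mem_V hc hv hvw
      have hwv := A.isInv_symm hvw
      have h2 := hℓ w v hwv
      rw [hmpt v] at h2
      have hlw : ℓ w ∈ ⨆ j, A.peirce (c j) 1 := by
        rw [← hmap]
        exact Submodule.mem_map_of_mem hw
      exact A.inv_mem_V hc hlw h2
    have hVall : ∀ a : J, a ∈ (⨆ j, A.peirce (c j) 1) →
        m a ∈ (⨆ j, A.peirce (c j) 1) := by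
      intro a ha
      obtain ⟨t, ht0, y, hty⟩ := A.exists_invertible_translate a
      have h1mem : A.one ∈ ⨆ j, A.peirce (c j) 1 := A.one_mem_V hc
      have hu : t • A.one - a ∈ ⨆ j, A.peirce (c j) 1 :=
        Submodule.sub_mem _ (Submodule.smul_mem _ t h1mem) ha
      have hm1 : m (t • A.one - a) ∈ ⨆ j, A.peirce (c j) 1 := hV _ hu ⟨y, hty⟩
      have hm2 : m (t • A.one) ∈ ⨆ j, A.peirce (c j) 1 :=
        hV _ (Submodule.smul_mem _ t h1mem) ⟨t⁻¹ • A.one, A.isInv_smul_one ht0⟩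
      have : m a = m (t • A.one) - m (t • A.one - a) := by
        rw [← map_sub]; congr 1; abel
      rw [this]
      exact Submodule.sub_mem _ hm2 hm1
    have hle : (⨆ j, A.peirce (c j) 1).map m.toLinearMap ≤ ⨆ j, A.peirce (c j) 1 := by
      rintro z ⟨v, hv, rfl⟩
      exact hVall v hv
    refine Submodule.eq_of_le_of_finrank_le hle ?_
    rw [LinearEquiv.finrank_map_eq m]
end

section
/- Let J be a Euclidean Jordan algebra, c an idempotent, x ∈ J(c,1) and y ∈ J(c,0). Then the quadratic map satisfies P(x+y) = P(x) + 2(L(x)L(y) + L(y)L(x)) + P(y); moreover P(x+y) preserves each Peirce space J(c,λ) (λ = 1, 1/2, 0), acting as P(x) on J(c,1), as 2(L(x)L(y)+L(y)L(x)) on J(c,1/2), and as P(y) on J(c,0). -/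
open scoped RealInnerProductSpace

variable {J : Type} [NormedAddCommGroup J] [InnerProductSpace ℝ J] [FiniteDimensional ℝ J]

/-- The quadratic representation `P(z) = 2L(z)² - L(z²)`. -/
noncomputable def EJA.Pquad (A : EJA J) (z : J) : J →ₗ[ℝ] J :=
  2 • (A.mul z ∘ₗ A.mul z) - A.mul (A.mul z z)

/-- Linearized Jordan identity. -/
lemma EJA.lin1 (A : EJA J) (x z v : J) :
    A.mul (A.mul z v) (A.mul x x) + 2 • A.mul (A.mul x v) (A.mul x z)
      = A.mul z (A.mul v (A.mul x x)) + 2 • A.mul x (A.mul v (A.mul x z)) := by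
  have h1 := A.jordan (x + z) v
  have h2 := A.jordan (x - z) v
  have h4 := A.jordan z v
  simp only [map_add, map_sub, LinearMap.add_apply, LinearMap.sub_apply, A.comm z x] at h1 h2
  linear_combination (norm := module) (2:ℝ)⁻¹ • h1 - (2:ℝ)⁻¹ • h2 - h4

/-- `L(c)` commutes with `L(u)` for `u` in the 1- or 0-Peirce space. -/
lemma EJA.commL (A : EJA J) {c : J} (hc : A.mul c c = c) {u : J}
    (h : A.mul c u = u ∨ A.mul c u = 0) (v : J) :
    A.mul c (A.mul u v) = A.mul u (A.mul c v) := by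
  have h1 := A.lin1 c u v
  rw [hc] at h1
  rcases h with h | h <;> rw [h] at h1
  · rw [A.comm (A.mul u v) c, A.comm v c, A.comm (A.mul c v) u, A.comm v u] at h1
    linear_combination (norm := module) -h1
  · simp only [map_zero, LinearMap.zero_apply, smul_zero, add_zero] at h1
    rw [A.comm (A.mul u v) c, A.comm v c] at h1
    exact h1

lemma EJA.mulMem (A : EJA J) {c : J} (hc : A.mul c c = c) {a : J}
    (ha : A.mul c a = a ∨ A.mul c a = 0) {μ : ℝ} {v : J} (hv : v ∈ A.peirce c μ) :
    A.mul a v ∈ A.peirce c μ := by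
  have hv' : A.mul c v = μ • v := Module.End.mem_eigenspace_iff.mp hv
  refine Module.End.mem_eigenspace_iff.mpr ?_
  show A.mul c (A.mul a v) = μ • A.mul a v
  rw [A.commL hc ha v, hv', map_smul]

/-- `J(c,1) ∘ J(c,0) = 0`. -/
lemma EJA.one_zero_mul (A : EJA J) {c : J} (hc : A.mul c c = c) {a b : J}
    (ha : A.mul c a = a) (hb : A.mul c b = 0) : A.mul a b = 0 := by
  have h1 : A.mul c (A.mul b a) = A.mul b a := by
    rw [A.commL hc (Or.inr hb) a, ha]
  have h2 : A.mul c (A.mul a b) = 0 := by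
    rw [A.commL hc (Or.inl ha) b, hb, map_zero]
  rw [A.comm a b, ← h1, A.comm b a, h2]

/-- For `a` in `J(c,1)` or `J(c,0)` and `v ∈ J(c,1/2)`, `2a(av) = a²v`. -/
lemma EJA.halfP (A : EJA J) {c : J} (hc : A.mul c c = c) {a : J}
    (ha : A.mul c a = a ∨ A.mul c a = 0) {v : J} (hv : A.mul c v = (1/2 : ℝ) • v) :
    2 • A.mul a (A.mul a v) = A.mul (A.mul a a) v := by
  have hav : A.mul c (A.mul a v) = (1/2 : ℝ) • A.mul a v := by
    rw [A.commL hc ha v, hv, map_smul]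
  have haa : A.mul c (A.mul a a) = A.mul a (A.mul c a) := A.commL hc ha a
  have h1 := A.lin1 a v c
  rw [A.comm v c, hv] at h1
  rcases ha with h | h
  · have haa' : A.mul c (A.mul a a) = A.mul a a := by rw [haa, h]
    rw [A.comm a c, h, haa', hav] at h1
    simp only [map_smul, LinearMap.smul_apply] at h1
    rw [A.comm v (A.mul a a)] at h1
    linear_combination (norm := module) (2:ℝ) • h1
  · have haa' : A.mul c (A.mul a a) = 0 := by rw [haa, h, map_zero]
    rw [A.comm a c, h, haa', hav] at h1
    simp only [map_zero, LinearMap.zero_apply, map_smul, LinearMap.smul_apply, smul_zero] at h1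
    rw [A.comm v (A.mul a a)] at h1
    linear_combination (norm := module) (-2:ℝ) • h1

/-- For an idempotent `c`, `x ∈ J(c,1)` and `y ∈ J(c,0)`:
`P(x+y) = P(x) + 2(L(x)L(y)+L(y)L(x)) + P(y)`, and `P(x+y)` preserves each
Peirce space, acting as `P(x)` on `J(c,1)`, as `2(L(x)L(y)+L(y)L(x))` on
`J(c,1/2)` and as `P(y)` on `J(c,0)`. -/
theorem stmt7 (A : EJA J) (c : J) (hc : A.mul c c = c) (x y : J)
    (hx : x ∈ A.peirce c 1) (hy : y ∈ A.peirce c 0) :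
    A.Pquad (x + y)
      = A.Pquad x + 2 • (A.mul x ∘ₗ A.mul y + A.mul y ∘ₗ A.mul x) + A.Pquad y ∧
    (∀ v ∈ A.peirce c 1, A.Pquad (x + y) v ∈ A.peirce c 1 ∧
        A.Pquad (x + y) v = A.Pquad x v) ∧
    (∀ v ∈ A.peirce c (1 / 2), A.Pquad (x + y) v ∈ A.peirce c (1 / 2) ∧
        A.Pquad (x + y) v = 2 • (A.mul x (A.mul y v) + A.mul y (A.mul x v))) ∧
    (∀ v ∈ A.peirce c 0, A.Pquad (x + y) v ∈ A.peirce c 0 ∧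
        A.Pquad (x + y) v = A.Pquad y v) := by
  have hx1 : A.mul c x = x := by simpa using Module.End.mem_eigenspace_iff.mp hx
  have hy0 : A.mul c y = 0 := by simpa using Module.End.mem_eigenspace_iff.mp hy
  have hxx : A.mul c (A.mul x x) = A.mul x x := by
    rw [A.commL hc (Or.inl hx1) x, hx1]
  have hyy : A.mul c (A.mul y y) = 0 := by
    rw [A.commL hc (Or.inr hy0) y, hy0, map_zero]
  have hxy : A.mul x y = 0 := A.one_zero_mul hc hx1 hy0
  have hyx : A.mul y x = 0 := by rw [A.comm y x]; exact hxy
  have hpart1 : A.Pquad (x + y)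
      = A.Pquad x + 2 • (A.mul x ∘ₗ A.mul y + A.mul y ∘ₗ A.mul x) + A.Pquad y := by
    ext v
    simp only [EJA.Pquad, LinearMap.sub_apply, LinearMap.add_apply, LinearMap.smul_apply,
      LinearMap.comp_apply, map_add, LinearMap.add_apply, hxy, hyx, map_zero,
      LinearMap.zero_apply, add_zero, zero_add]
    abel
  refine ⟨hpart1, ?_, ?_, ?_⟩
  · -- J(c,1)
    intro v hv
    have hv1 : A.mul c v = v := by simpa using Module.End.mem_eigenspace_iff.mp hv
    have hyv : A.mul y v = 0 := by
      rw [A.comm y v]; exact A.one_zero_mul hc hv1 hy0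
    have hxv : A.mul c (A.mul x v) = A.mul x v := by
      rw [A.commL hc (Or.inl hx1) v, hv1]
    have hyyv : A.mul (A.mul y y) v = 0 := by
      rw [A.comm (A.mul y y) v]; exact A.one_zero_mul hc hv1 hyy
    have hyxv : A.mul y (A.mul x v) = 0 := by
      rw [A.comm y (A.mul x v)]; exact A.one_zero_mul hc hxv hy0
    have heq : A.Pquad (x + y) v = A.Pquad x v := by
      rw [hpart1]
      simp only [LinearMap.add_apply, LinearMap.smul_apply, LinearMap.comp_apply,
        EJA.Pquad, LinearMap.sub_apply, hyv, hyxv, hyyv, map_zero, smul_zero, add_zero,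
        zero_add, sub_zero, zero_sub, sub_self, neg_zero]
    refine ⟨?_, heq⟩
    rw [heq]
    have hvmem : v ∈ A.peirce c 1 := hv
    have h1 : A.mul x (A.mul x v) ∈ A.peirce c 1 :=
      A.mulMem hc (Or.inl hx1) (A.mulMem hc (Or.inl hx1) hvmem)
    have h2 : A.mul (A.mul x x) v ∈ A.peirce c 1 := A.mulMem hc (Or.inl hxx) hvmem
    show A.Pquad x v ∈ A.peirce c 1
    simp only [EJA.Pquad, LinearMap.sub_apply, LinearMap.smul_apply, LinearMap.comp_apply]
    exact sub_mem (nsmul_mem h1 2) h2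
  · -- J(c,1/2)
    intro v hv
    have hv' : A.mul c v = (1/2 : ℝ) • v := Module.End.mem_eigenspace_iff.mp hv
    have hPx : A.Pquad x v = 0 := by
      have h := A.halfP hc (Or.inl hx1) hv'
      simp only [EJA.Pquad, LinearMap.sub_apply, LinearMap.smul_apply, LinearMap.comp_apply]
      rw [h, sub_self]
    have hPy : A.Pquad y v = 0 := by
      have h := A.halfP hc (Or.inr hy0) hv'
      simp only [EJA.Pquad, LinearMap.sub_apply, LinearMap.smul_apply, LinearMap.comp_apply]
      rw [h, sub_self]
    have heq : A.Pquad (x + y) v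
        = 2 • (A.mul x (A.mul y v) + A.mul y (A.mul x v)) := by
      rw [hpart1]
      simp only [LinearMap.add_apply, LinearMap.smul_apply, LinearMap.comp_apply,
        hPx, hPy, zero_add, add_zero]
    refine ⟨?_, heq⟩
    rw [heq]
    have h1 : A.mul x (A.mul y v) ∈ A.peirce c (1/2) :=
      A.mulMem hc (Or.inl hx1) (A.mulMem hc (Or.inr hy0) hv)
    have h2 : A.mul y (A.mul x v) ∈ A.peirce c (1/2) :=
      A.mulMem hc (Or.inr hy0) (A.mulMem hc (Or.inl hx1) hv)
    exact nsmul_mem (add_mem h1 h2) 2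
  · -- J(c,0)
    intro v hv
    have hv0 : A.mul c v = 0 := by simpa using Module.End.mem_eigenspace_iff.mp hv
    have hxv : A.mul x v = 0 := A.one_zero_mul hc hx1 hv0
    have hyv0 : A.mul c (A.mul y v) = 0 := by
      rw [A.commL hc (Or.inr hy0) v, hv0, map_zero]
    have hxyv : A.mul x (A.mul y v) = 0 := A.one_zero_mul hc hx1 hyv0
    have hxxv : A.mul (A.mul x x) v = 0 := A.one_zero_mul hc hxx hv0
    have heq : A.Pquad (x + y) v = A.Pquad y v := by
      rw [hpart1]
      simp only [LinearMap.add_apply, LinearMap.smul_apply, LinearMap.comp_apply,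
        EJA.Pquad, LinearMap.sub_apply, hxv, hxyv, hxxv, map_zero, smul_zero, add_zero,
        zero_add, sub_zero, zero_sub, sub_self, neg_zero]
    refine ⟨?_, heq⟩
    rw [heq]
    have h1 : A.mul y (A.mul y v) ∈ A.peirce c 0 :=
      A.mulMem hc (Or.inr hy0) (A.mulMem hc (Or.inr hy0) hv)
    have h2 : A.mul (A.mul y y) v ∈ A.peirce c 0 := A.mulMem hc (Or.inr hyy) hv
    show A.Pquad y v ∈ A.peirce c 0
    simp only [EJA.Pquad, LinearMap.sub_apply, LinearMap.smul_apply, LinearMap.comp_apply]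
    exact sub_mem (nsmul_mem h1 2) h2
end

section
/- For a Euclidean space F of dimension N and a harmonic polynomial q on F (extended holomorphically), ∫_F e^{i⟨ξ,η⟩} e^{−½⟨ξ,ξ⟩} q(ξ) dξ = (2π)^{N/2} e^{−½⟨η,η⟩} q(iη) for all η ∈ F. -/
open scoped RealInnerProductSpace
open MeasureTheory

noncomputable section

namespace Hecke16
open MvPolynomial Finset Real Complex
open scoped Nat


/-- "Positive-sign Hermite" polynomials: `Hp n = e^{D²/2} X^n`. -/
def Hp : ℕ → Polynomial ℂ
  | 0 => 1
  | 1 => Polynomial.X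
  | (n+2) => Polynomial.X * Hp (n+1) + Polynomial.C ((n : ℂ)+1) * Hp n

lemma Hp_eval_succ (m : ℕ) (z : ℂ) :
    (Hp (m+1)).eval z = z * (Hp m).eval z + (m : ℂ) * (Hp (m-1)).eval z := by
  match m with
  | 0 => simp [Hp]
  | (m+1) =>
    show (Hp (m+2)).eval z = _
    rw [Hp, Nat.add_sub_cancel]
    push_cast
    simp

variable {N : ℕ}

/-- Laplacian on polynomials. -/
def lap (p : MvPolynomial (Fin N) ℂ) : MvPolynomial (Fin N) ℂ :=
  ∑ k : Fin N, pderiv k (pderiv k p)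

lemma lap_add (p q : MvPolynomial (Fin N) ℂ) : lap (p + q) = lap p + lap q := by
  simp [lap, Finset.sum_add_distrib]

lemma lap_smul (a : ℂ) (p : MvPolynomial (Fin N) ℂ) : lap (a • p) = a • lap p := by
  simp [lap, Finset.smul_sum]

lemma lap_zero : lap (0 : MvPolynomial (Fin N) ℂ) = 0 := by simp [lap]

lemma lap_iterate_add (m : ℕ) (p q : MvPolynomial (Fin N) ℂ) :
    lap^[m] (p + q) = lap^[m] p + lap^[m] q := by
  induction m generalizing p q with
  | zero => simp
  | succ m ih => simp [Function.iterate_succ_apply, lap_add, ih]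

lemma lap_iterate_zero (m : ℕ) : lap^[m] (0 : MvPolynomial (Fin N) ℂ) = 0 := by
  induction m with
  | zero => simp
  | succ m ih => simp [Function.iterate_succ_apply, lap_zero, ih]

lemma lap_iterate_smul (m : ℕ) (a : ℂ) (p : MvPolynomial (Fin N) ℂ) :
    lap^[m] (a • p) = a • lap^[m] p := by
  induction m generalizing p with
  | zero => simp
  | succ m ih => simp [Function.iterate_succ_apply, lap_smul, ih]

lemma lap_iterate_sum {ι : Type*} (s : Finset ι) (f : ι → MvPolynomial (Fin N) ℂ) (m : ℕ) :
    lap^[m] (∑ i ∈ s, f i) = ∑ i ∈ s, lap^[m] (f i) := by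
  classical
  induction s using Finset.induction with
  | empty => simp [lap_iterate_zero]
  | insert _ _ h ih => rw [Finset.sum_insert h, Finset.sum_insert h, lap_iterate_add, ih]

lemma pderiv_pderiv_comm (i j : Fin N) (p : MvPolynomial (Fin N) ℂ) :
    pderiv i (pderiv j p) = pderiv j (pderiv i p) := by
  induction p using MvPolynomial.induction_on' with
  | monomial s a =>
    rcases eq_or_ne i j with rfl | hij
    · rfl
    · simp only [pderiv_monomial]
      rw [tsub_right_comm]
      congr 1
      have h1 : ((s - Finsupp.single j 1 : Fin N →₀ ℕ)) i = s i := by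
        rw [Finsupp.tsub_apply, Finsupp.single_apply]
        simp [Ne.symm hij]
      have h2 : ((s - Finsupp.single i 1 : Fin N →₀ ℕ)) j = s j := by
        rw [Finsupp.tsub_apply, Finsupp.single_apply]
        simp [hij]
      rw [h1, h2]; ring
  | add p q hp hq => simp [map_add, hp, hq]

lemma pderiv_lap (j : Fin N) (p : MvPolynomial (Fin N) ℂ) :
    pderiv j (lap p) = lap (pderiv j p) := by
  simp only [lap, map_sum]
  exact Finset.sum_congr rfl fun k _ => by
    rw [pderiv_pderiv_comm j k, pderiv_pderiv_comm j k]

lemma pderiv_lap_iterate (j : Fin N) (m : ℕ) (p : MvPolynomial (Fin N) ℂ) :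
    pderiv j (lap^[m] p) = lap^[m] (pderiv j p) := by
  induction m generalizing p with
  | zero => simp
  | succ m ih =>
    rw [Function.iterate_succ_apply, Function.iterate_succ_apply, ih, pderiv_lap]

lemma lap_X_mul (j : Fin N) (p : MvPolynomial (Fin N) ℂ) :
    lap (X j * p) = X j * lap p + (2:ℂ) • pderiv j p := by
  classical
  simp only [lap]
  have h : ∀ k : Fin N, pderiv k (pderiv k (X j * p)) =
      X j * pderiv k (pderiv k p) +
        (if k = j then (2:ℂ) else 0) • pderiv k p := by
    intro k
    rw [pderiv_mul, pderiv_X]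
    rcases eq_or_ne k j with rfl | hkj
    · simp [pderiv_mul, pderiv_X, two_smul]
      ring
    · simp [Finsupp.single_eq_of_ne, hkj, pderiv_mul, pderiv_X]
  simp only [h]
  rw [Finset.sum_add_distrib, ← Finset.mul_sum]
  congr 1
  simp only [ite_smul, zero_smul]
  rw [Finset.sum_ite_eq' Finset.univ j (fun k => (2:ℂ) • pderiv k p)]
  simp [two_smul]


lemma lap_iterate_X_mul (j : Fin N) (m : ℕ) (p : MvPolynomial (Fin N) ℂ) :
    lap^[m+1] (X j * p) =
      X j * lap^[m+1] p + ((2:ℂ) * (m+1)) • pderiv j (lap^[m] p) := by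
  induction m generalizing p with
  | zero =>
    simpa using lap_X_mul j p
  | succ m ih =>
    rw [Function.iterate_succ_apply' lap (m+1) (X j * p), ih, lap_add, lap_X_mul, lap_smul,
      ← pderiv_lap, ← Function.iterate_succ_apply' lap (m+1) p,
      ← Function.iterate_succ_apply' lap m p]
    push_cast
    module

/-- Heat-semigroup partial sum `∑_{m ≤ n} (2^m m!)⁻¹ Δ^m p`. -/
def hs (n : ℕ) (p : MvPolynomial (Fin N) ℂ) : MvPolynomial (Fin N) ℂ :=
  ∑ m ∈ Finset.range (n+1), (((2:ℂ)^m * m.factorial))⁻¹ • lap^[m] p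

lemma hs_zero_n (n : ℕ) : hs n (0 : MvPolynomial (Fin N) ℂ) = 0 := by
  simp [hs, lap_iterate_zero]

lemma hs_sum {ι : Type*} (s : Finset ι) (f : ι → MvPolynomial (Fin N) ℂ) (n : ℕ) :
    hs n (∑ i ∈ s, f i) = ∑ i ∈ s, hs n (f i) := by
  unfold hs
  rw [Finset.sum_comm]
  exact Finset.sum_congr rfl fun m _ => by rw [lap_iterate_sum, Finset.smul_sum]

lemma pderiv_hs (j : Fin N) (n : ℕ) (p : MvPolynomial (Fin N) ℂ) :
    pderiv j (hs n p) = hs n (pderiv j p) := by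
  unfold hs
  rw [map_sum]
  exact Finset.sum_congr rfl fun m _ => by
    rw [Derivation.map_smul, pderiv_lap_iterate]

lemma hcoef (m : ℕ) :
    (((2:ℂ)^(m+1) * (m+1).factorial))⁻¹ * ((2:ℂ) * ((m:ℂ)+1)) =
      (((2:ℂ)^m * m.factorial))⁻¹ := by
  have hf : ((m.factorial : ℂ)) ≠ 0 := by
    exact_mod_cast Nat.cast_ne_zero.mpr m.factorial_ne_zero
  have hm1 : ((m:ℂ)+1) ≠ 0 := Nat.cast_add_one_ne_zero m
  have h2 : (2:ℂ) ≠ 0 := two_ne_zero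
  rw [pow_succ, Nat.factorial_succ]
  push_cast
  field_simp

lemma hs_X_mul (j : Fin N) (n : ℕ) (p : MvPolynomial (Fin N) ℂ) :
    hs (n+1) (X j * p) = X j * hs (n+1) p + pderiv j (hs n p) := by
  have key : ∀ i : ℕ, (((2:ℂ)^(i+1) * (i+1).factorial))⁻¹ • lap^[i+1] (X j * p)
      = (((2:ℂ)^(i+1) * (i+1).factorial))⁻¹ • (X j * lap^[i+1] p)
        + (((2:ℂ)^i * i.factorial))⁻¹ • pderiv j (lap^[i] p) := by
    intro i
    rw [lap_iterate_X_mul, smul_add, smul_smul, hcoef]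
  have hXs : X j * (∑ m ∈ Finset.range (n+1+1), (((2:ℂ)^m * m.factorial))⁻¹ • lap^[m] p)
      = (∑ i ∈ Finset.range (n+1),
          (((2:ℂ)^(i+1) * (i+1).factorial))⁻¹ • (X j * lap^[i+1] p))
        + (((2:ℂ)^0 * (Nat.factorial 0)))⁻¹ • (X j * lap^[0] p) := by
    rw [Finset.mul_sum, Finset.sum_range_succ' _ (n+1)]
    simp only [mul_smul_comm]
  have hder : pderiv j (∑ m ∈ Finset.range (n+1), (((2:ℂ)^m * m.factorial))⁻¹ • lap^[m] p)
      = ∑ i ∈ Finset.range (n+1), (((2:ℂ)^i * i.factorial))⁻¹ • pderiv j (lap^[i] p) := by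
    rw [map_sum]
    exact Finset.sum_congr rfl fun m _ => by rw [Derivation.map_smul]
  unfold hs
  rw [Finset.sum_range_succ' _ (n+1)]
  simp only [key]
  rw [Finset.sum_add_distrib, hXs, hder]
  abel

lemma wt_sub_single {α : Fin N →₀ ℕ} {j : Fin N} (h : α j ≠ 0) :
    ∑ k, (α - Finsupp.single j 1 : Fin N →₀ ℕ) k = (∑ k, α k) - 1 := by
  classical
  rw [← Finset.add_sum_erase _ _ (Finset.mem_univ j),
    ← Finset.add_sum_erase _ α (Finset.mem_univ j)]
  have h1 : (α - Finsupp.single j 1 : Fin N →₀ ℕ) j = α j - 1 := by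
    rw [Finsupp.tsub_apply, Finsupp.single_apply]; simp
  have h2 : ∀ k ∈ Finset.univ.erase j,
      (α - Finsupp.single j 1 : Fin N →₀ ℕ) k = α k := by
    intro k hk
    rw [Finsupp.tsub_apply, Finsupp.single_apply]
    simp [Ne.symm (Finset.mem_erase.mp hk).1]
  rw [Finset.sum_congr rfl h2, h1]
  have e : (Finset.univ.erase j).sum ⇑α = ∑ x ∈ Finset.univ.erase j, α x := rfl
  rw [e]
  have hj : 1 ≤ α j := Nat.one_le_iff_ne_zero.mpr h
  omega

lemma lap_iterate_monomial_vanish :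
    ∀ (m : ℕ) (α : Fin N →₀ ℕ) (a : ℂ), (∑ k, α k) < m →
      lap^[m] (monomial α a) = 0 := by
  intro m
  induction m with
  | zero => omega
  | succ m ih =>
    intro α a hlt
    rw [Function.iterate_succ_apply]
    have hlap : lap (monomial α a) =
        ∑ k : Fin N, pderiv k (pderiv k (monomial α a)) := rfl
    rw [hlap]
    rw [lap_iterate_sum]
    rw [Finset.sum_eq_zero]
    intro k _
    rw [pderiv_monomial, pderiv_monomial]
    rcases Nat.eq_zero_or_pos (α k) with h0 | h1
    · rw [h0]; push_cast; rw [mul_zero, zero_mul, map_zero, lap_iterate_zero]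
    rcases Nat.lt_or_ge (α k) 2 with h2 | h2
    · have h3 : α k = 1 := by omega
      have h4 : ((α - Finsupp.single k 1 : Fin N →₀ ℕ)) k = 0 := by
        rw [Finsupp.tsub_apply, Finsupp.single_apply]; simp [h3]
      rw [h4]; push_cast; rw [mul_zero, map_zero, lap_iterate_zero]
    · apply ih
      have w1 := wt_sub_single (j := k) (α := α) (by omega)
      have hk1 : ((α - Finsupp.single k 1 : Fin N →₀ ℕ)) k ≠ 0 := by
        rw [Finsupp.tsub_apply, Finsupp.single_apply]; simp; omega
      have w2 := wt_sub_single (j := k) (α := α - Finsupp.single k 1) hk1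
      rw [w2, w1]
      have : 2 ≤ ∑ k, α k := le_trans h2 (Finset.single_le_sum
        (f := fun k => α k) (fun _ _ => Nat.zero_le _) (Finset.mem_univ k))
      omega

lemma hs_monomial_stab {d : ℕ} {α : Fin N →₀ ℕ} (a : ℂ) (h : (∑ k, α k) ≤ d) :
    hs (d+1) (monomial α a) = hs d (monomial α a) := by
  unfold hs
  rw [Finset.sum_range_succ _ (d+1), lap_iterate_monomial_vanish (d+1) α a (by omega)]
  simp


/-- The "Hecke transform": apply `e^{Δ/2}` via Hermite-type polynomials & evaluate at `c`. -/
def TE (c : Fin N → ℂ) (p : MvPolynomial (Fin N) ℂ) : ℂ :=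
  ∑ α ∈ p.support, p.coeff α * ∏ k, (Hp (α k)).eval (c k)

lemma TE_monomial (c : Fin N → ℂ) (α : Fin N →₀ ℕ) (a : ℂ) :
    TE c (monomial α a) = a * ∏ k, (Hp (α k)).eval (c k) := by
  classical
  rcases eq_or_ne a 0 with rfl | ha
  · simp [TE]
  · rw [TE, support_monomial, if_neg ha, Finset.sum_singleton, coeff_monomial, if_pos rfl]

lemma Rmon (c : Fin N → ℂ) (j : Fin N) (β : Fin N →₀ ℕ) (a : ℂ) :
    TE c (X j * monomial β a)
      = c j * TE c (monomial β a) + TE c (pderiv j (monomial β a)) := by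
  classical
  rw [X, monomial_mul, one_mul, pderiv_monomial, TE_monomial, TE_monomial, TE_monomial]
  have split : ∀ γ : Fin N →₀ ℕ, ∏ k, (Hp (γ k)).eval (c k)
      = (Hp (γ j)).eval (c j) * ∏ k ∈ Finset.univ.erase j, (Hp (γ k)).eval (c k) :=
    fun γ => (Finset.mul_prod_erase Finset.univ _ (Finset.mem_univ j)).symm
  rw [split, split, split]
  have e1 : ∀ k ∈ Finset.univ.erase j,
      (Hp (((Finsupp.single j 1 + β : Fin N →₀ ℕ)) k)).eval (c k)
        = (Hp (β k)).eval (c k) := by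
    intro k hk
    rw [Finsupp.add_apply, Finsupp.single_apply, if_neg (Finset.mem_erase.mp hk).1.symm,
      zero_add]
  have e2 : ∀ k ∈ Finset.univ.erase j,
      (Hp (((β - Finsupp.single j 1 : Fin N →₀ ℕ)) k)).eval (c k)
        = (Hp (β k)).eval (c k) := by
    intro k hk
    rw [Finsupp.tsub_apply, Finsupp.single_apply, if_neg (Finset.mem_erase.mp hk).1.symm,
      Nat.sub_zero]
  rw [Finset.prod_congr rfl e1, Finset.prod_congr rfl e2]
  have hj1 : ((Finsupp.single j 1 + β : Fin N →₀ ℕ)) j = β j + 1 := by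
    rw [Finsupp.add_apply, Finsupp.single_apply, if_pos rfl]; omega
  have hj2 : ((β - Finsupp.single j 1 : Fin N →₀ ℕ)) j = β j - 1 := by
    rw [Finsupp.tsub_apply, Finsupp.single_apply, if_pos rfl]
  rw [hj1, hj2, Hp_eval_succ]
  push_cast
  ring

lemma key (c : Fin N → ℂ) :
    ∀ (d : ℕ) (α : Fin N →₀ ℕ) (a : ℂ), (∑ k, α k) ≤ d →
      TE c (monomial α a) = eval c (hs d (monomial α a)) := by
  intro d
  induction d with
  | zero =>
    intro α a h
    have hα : α = 0 := by
      ext k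
      have := Finset.sum_eq_zero_iff.mp (Nat.le_zero.mp h) k (Finset.mem_univ k)
      simpa using this
    subst hα
    rw [TE_monomial]
    simp [hs, Hp]
  | succ d ih =>
    intro α a h
    rcases Nat.lt_or_ge d (∑ k, α k) with hge | hle
    swap
    · rw [hs_monomial_stab a hle]; exact ih α a hle
    · have hw : (∑ k, α k) = d + 1 := le_antisymm h hge
      have hex : ∃ j, α j ≠ 0 := by
        by_contra hc
        push_neg at hc
        rw [Finset.sum_eq_zero (fun k _ => hc k)] at hw
        omega
      obtain ⟨j, hj⟩ := hex
      set β : Fin N →₀ ℕ := α - Finsupp.single j 1 with hβ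
      have hβj : ∀ k, α k = (Finsupp.single j 1 + β : Fin N →₀ ℕ) k := by
        intro k
        rw [Finsupp.add_apply, hβ, Finsupp.tsub_apply, Finsupp.single_apply]
        rcases eq_or_ne j k with rfl | hne
        · simp; omega
        · simp [hne]
      have hα : α = Finsupp.single j 1 + β := Finsupp.ext hβj
      have hwtβ : (∑ k, β k) ≤ d := by
        rw [hβ, wt_sub_single hj]; omega
      have hmon : monomial α a = X j * monomial β a := by
        rw [X, monomial_mul, one_mul, hα]
      rw [hmon, Rmon, hs_X_mul, map_add, eval_mul, eval_X, pderiv_hs,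
        hs_monomial_stab a hwtβ, ih β a hwtβ, pderiv_monomial,
        ih _ _ (le_trans (Finset.sum_le_sum
          (fun k _ => by
            rw [Finsupp.tsub_apply]
            exact Nat.sub_le _ _)) hwtβ)]

/-- Main algebraic theorem: for a harmonic polynomial, the Hecke transform is evaluation. -/
theorem TE_eq_eval (c : Fin N → ℂ) (p : MvPolynomial (Fin N) ℂ) (hharm : lap p = 0) :
    TE c p = eval c p := by
  classical
  set n : ℕ := ∑ α ∈ p.support, ∑ k, α k with hn
  have h1 : TE c p = ∑ α ∈ p.support, TE c (monomial α (p.coeff α)) := by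
    rw [TE]
    exact Finset.sum_congr rfl fun α _ => (TE_monomial c α _).symm
  have h2 : ∀ α ∈ p.support, TE c (monomial α (p.coeff α))
      = eval c (hs n (monomial α (p.coeff α))) := by
    intro α hα
    exact key c n α _ (Finset.single_le_sum
      (f := fun α => ∑ k, α k) (fun _ _ => Nat.zero_le _) hα)
  have h3 : hs n p = p := by
    conv_lhs => rw [hs, Finset.sum_range_succ' _ n]
    have hz : ∀ i ∈ Finset.range n,
        (((2:ℂ)^(i+1) * (i+1).factorial))⁻¹ • lap^[i+1] p = 0 := by
      intro i _
      rw [Function.iterate_succ_apply, hharm, lap_iterate_zero, smul_zero]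
    rw [Finset.sum_congr rfl hz]
    simp
  rw [h1, Finset.sum_congr rfl h2, ← map_sum, ← hs_sum, ← as_sum p, h3]




lemma re_quad (c : ℂ) (x : ℝ) : (-(1/2 : ℂ)*x^2 + c*x).re = -(1/2)*x^2 + c.re*x := by
  simp [Complex.add_re, Complex.mul_re, Complex.ofReal_re, Complex.ofReal_im,
    ← Complex.ofReal_pow]

/-- Integrability of `x^n e^{-x²/2 + cx}` on `ℝ`. -/
lemma integrable_pow_gauss (n : ℕ) (c : ℂ) :
    Integrable (fun x : ℝ => (x:ℂ)^n * Complex.exp (-(1/2)*x^2 + c*x)) := by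
  have hmain : ∀ s : ℝ, Integrable (fun x : ℝ => Real.exp (-(1/2)*x^2 + s*x)) := by
    intro s
    have h := (integrable_cexp_quadratic (b := (1/2 : ℂ)) (by norm_num) (s:ℂ) 0).norm
    have heq : ∀ x : ℝ, ‖Complex.exp (-(1/2 : ℂ)*x^2 + (s:ℂ)*x + 0)‖
        = Real.exp (-(1/2)*x^2 + s*x) := by
      intro x
      rw [add_zero, Complex.norm_exp, re_quad, Complex.ofReal_re]
    simpa only [heq] using h
  apply Integrable.mono'
    (((hmain (|c.re|+1)).add (hmain (-(|c.re|+1)))).const_mul (n ! : ℝ))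
  · apply Continuous.aestronglyMeasurable
    exact (Complex.continuous_ofReal.pow n).mul (Complex.continuous_exp.comp (by fun_prop))
  · filter_upwards with x
    have hnorm : ‖(x:ℂ)^n * Complex.exp (-(1/2)*x^2 + c*x)‖
        = |x|^n * Real.exp (-(1/2)*x^2 + c.re*x) := by
      rw [norm_mul, norm_pow, Complex.norm_real, Real.norm_eq_abs,
        Complex.norm_exp, re_quad]
    rw [hnorm]
    have h1 : |x|^n ≤ (n ! : ℝ) * Real.exp |x| := by
      have h2 : |x|^n / (n ! : ℝ) ≤ Real.exp |x| := by
        calc |x|^n / (n ! : ℝ)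
            ≤ ∑ i ∈ Finset.range (n+1), |x|^i / (i ! : ℝ) :=
              Finset.single_le_sum (f := fun i => |x|^i / (i ! : ℝ))
                (fun i _ => by positivity) (Finset.self_mem_range_succ n)
          _ ≤ Real.exp |x| := Real.sum_le_exp_of_nonneg (abs_nonneg x) (n+1)
      have h3 : (0:ℝ) < (n ! : ℝ) := by positivity
      calc |x|^n = |x|^n / (n ! : ℝ) * (n ! : ℝ) := by field_simp
        _ ≤ Real.exp |x| * (n ! : ℝ) := mul_le_mul_of_nonneg_right h2 (le_of_lt h3)
        _ = (n ! : ℝ) * Real.exp |x| := by ring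
    have hsplit : Real.exp (-(1/2)*x^2 + (c.re*x + |x|))
        ≤ Real.exp (-(1/2)*x^2 + (|c.re|+1)*x) + Real.exp (-(1/2)*x^2 + -(|c.re|+1)*x) := by
      rcases le_or_gt 0 x with hx | hx
      · apply le_add_of_le_of_nonneg _ (Real.exp_nonneg _)
        apply Real.exp_le_exp.mpr
        have : c.re * x ≤ |c.re| * x := mul_le_mul_of_nonneg_right (le_abs_self _) hx
        rw [_root_.abs_of_nonneg hx]
        nlinarith
      · rw [add_comm (Real.exp _)]
        apply le_add_of_le_of_nonneg _ (Real.exp_nonneg _)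
        apply Real.exp_le_exp.mpr
        have : c.re * x ≤ -|c.re| * x := by
          have := neg_abs_le c.re
          nlinarith
        rw [_root_.abs_of_neg hx]
        nlinarith
    calc |x|^n * Real.exp (-(1/2)*x^2 + c.re*x)
        ≤ ((n ! : ℝ) * Real.exp |x|) * Real.exp (-(1/2)*x^2 + c.re*x) :=
          mul_le_mul_of_nonneg_right h1 (Real.exp_nonneg _)
      _ = (n ! : ℝ) * Real.exp (-(1/2)*x^2 + (c.re*x + |x|)) := by
          rw [mul_assoc, ← Real.exp_add]; ring_nf
      _ ≤ (n ! : ℝ) * (Real.exp (-(1/2)*x^2 + (|c.re|+1)*x)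
            + Real.exp (-(1/2)*x^2 + -(|c.re|+1)*x)) :=
          mul_le_mul_of_nonneg_left hsplit (by positivity)


/-- The basic 1D integral. -/
def F (n : ℕ) (c : ℂ) : ℂ := ∫ x : ℝ, (x:ℂ)^n * Complex.exp (-(1/2)*x^2 + c*x)

lemma F_zero (c : ℂ) : F 0 c = (2*(π:ℂ))^(1/2 : ℂ) * Complex.exp (c^2/2) := by
  have h := integral_cexp_quadratic (b := (-(1/2) : ℂ)) (by norm_num) c 0
  rw [F]
  simp only [pow_zero, one_mul]
  have harg : ∀ x : ℝ, (-(1/2 : ℂ))*x^2 + c*x = (-(1/2 : ℂ))*x^2 + c*x + 0 := by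
    intro x; ring
  rw [show (fun x : ℝ => Complex.exp (-(1/2 : ℂ)*x^2 + c*x))
      = fun x : ℝ => Complex.exp (-(1/2 : ℂ)*x^2 + c*x + 0) from funext fun x => by rw [← harg x]]
  rw [h]
  congr 1
  · congr 1
    rw [neg_neg]
    rw [div_eq_iff (by norm_num : (1/2 : ℂ) ≠ 0)]
    ring
  · congr 1
    ring

lemma deriv_aux (n : ℕ) (c : ℂ) (x : ℝ) :
    HasDerivAt (fun y : ℝ => (y:ℂ)^n * Complex.exp (-(1/2)*y^2 + c*y))
      (((n:ℂ) * (x:ℂ)^(n-1)) * Complex.exp (-(1/2)*(x:ℂ)^2 + c*x)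
        + (x:ℂ)^n * (Complex.exp (-(1/2)*(x:ℂ)^2 + c*x) * (-(1/2)*(2*(x:ℂ)) + c))) x := by
  have h1 : HasDerivAt (fun z : ℂ => -(1/2)*z^2 + c*z) (-(1/2)*(2*(x:ℂ)^1) + c*1) (x:ℂ) := by
    exact (((hasDerivAt_pow 2 (x:ℂ)).const_mul (-(1/2):ℂ)).add
      ((hasDerivAt_id (x:ℂ)).const_mul c))
  have h2 : HasDerivAt (fun z : ℂ => Complex.exp (-(1/2)*z^2 + c*z))
      (Complex.exp (-(1/2)*(x:ℂ)^2 + c*x) * (-(1/2)*(2*(x:ℂ)) + c)) (x:ℂ) := by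
    have := h1.cexp
    simpa using this
  have h3 : HasDerivAt (fun z : ℂ => z^n * Complex.exp (-(1/2)*z^2 + c*z))
      (((n:ℂ) * (x:ℂ)^(n-1)) * Complex.exp (-(1/2)*(x:ℂ)^2 + c*x)
        + (x:ℂ)^n * (Complex.exp (-(1/2)*(x:ℂ)^2 + c*x) * (-(1/2)*(2*(x:ℂ)) + c))) (x:ℂ) :=
    (hasDerivAt_pow n (x:ℂ)).mul h2
  exact h3.comp_ofReal

lemma ibp (n : ℕ) (c : ℂ) : F (n+2) c = c * F (n+1) c + ((n:ℂ)+1) * F n c := by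
  have hint : ∀ m : ℕ, Integrable
      (fun x : ℝ => (x:ℂ)^m * Complex.exp (-(1/2)*x^2 + c*x)) := fun m =>
    integrable_pow_gauss m c
  set E : ℝ → ℂ := fun x => Complex.exp (-(1/2)*(x:ℂ)^2 + c*(x:ℂ)) with hE
  have hfeq : (fun x : ℝ => (((n:ℂ)+1) * (x:ℂ)^n) * E x
      + (x:ℂ)^(n+1) * (E x * (-(1/2)*(2*(x:ℂ)) + c)))
      = fun x : ℝ => ((n:ℂ)+1) * ((x:ℂ)^n * E x) + c * ((x:ℂ)^(n+1) * E x)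
        - (x:ℂ)^(n+2) * E x := by
    funext x
    ring
  have hder : ∀ x : ℝ, HasDerivAt (fun y : ℝ => (y:ℂ)^(n+1) * E y)
      ((((n:ℂ)+1) * (x:ℂ)^n) * E x
        + (x:ℂ)^(n+1) * (E x * (-(1/2)*(2*(x:ℂ)) + c))) x := by
    intro x
    have := deriv_aux (n+1) c x
    rw [Nat.add_sub_cancel] at this
    push_cast at this ⊢
    exact this
  have hf' : Integrable (fun x : ℝ => (((n:ℂ)+1) * (x:ℂ)^n) * E x
      + (x:ℂ)^(n+1) * (E x * (-(1/2)*(2*(x:ℂ)) + c))) := by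
    rw [hfeq]
    exact (((hint n).const_mul _).add ((hint (n+1)).const_mul _)).sub (hint (n+2))
  have hzero := integral_eq_zero_of_hasDerivAt_of_integrable hder hf' (hint (n+1))
  rw [hfeq] at hzero
  have ha : Integrable (fun x : ℝ => ((n:ℂ)+1) * ((x:ℂ)^n * E x)) := (hint n).const_mul _
  have hb : Integrable (fun x : ℝ => c * ((x:ℂ)^(n+1) * E x)) := (hint (n+1)).const_mul _
  have hab : Integrable (fun x : ℝ => ((n:ℂ)+1) * ((x:ℂ)^n * E x)
      + c * ((x:ℂ)^(n+1) * E x)) := ha.add hb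
  rw [integral_sub hab (hint (n+2)), integral_add ha hb,
    integral_const_mul, integral_const_mul] at hzero
  have h2 : ((n:ℂ)+1) * F n c + c * F (n+1) c - F (n+2) c = 0 := hzero
  linear_combination -h2

lemma ibp0 (c : ℂ) : F 1 c = c * F 0 c := by
  have hint : ∀ m : ℕ, Integrable
      (fun x : ℝ => (x:ℂ)^m * Complex.exp (-(1/2)*x^2 + c*x)) := fun m =>
    integrable_pow_gauss m c
  set E : ℝ → ℂ := fun x => Complex.exp (-(1/2)*(x:ℂ)^2 + c*(x:ℂ)) with hE
  have hfeq : (fun x : ℝ => ((0:ℂ) * (x:ℂ)^(0-1)) * E x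
      + (x:ℂ)^0 * (E x * (-(1/2)*(2*(x:ℂ)) + c)))
      = fun x : ℝ => c * ((x:ℂ)^0 * E x) - (x:ℂ)^1 * E x := by
    funext x
    ring
  have hder : ∀ x : ℝ, HasDerivAt (fun y : ℝ => (y:ℂ)^0 * E y)
      (((0:ℂ) * (x:ℂ)^(0-1)) * E x + (x:ℂ)^0 * (E x * (-(1/2)*(2*(x:ℂ)) + c))) x := by
    intro x
    have := deriv_aux 0 c x
    push_cast at this ⊢
    exact this
  have hf' : Integrable (fun x : ℝ => ((0:ℂ) * (x:ℂ)^(0-1)) * E x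
      + (x:ℂ)^0 * (E x * (-(1/2)*(2*(x:ℂ)) + c))) := by
    rw [hfeq]
    exact ((hint 0).const_mul _).sub (hint 1)
  have hzero := integral_eq_zero_of_hasDerivAt_of_integrable hder hf' (hint 0)
  rw [hfeq] at hzero
  have ha : Integrable (fun x : ℝ => c * ((x:ℂ)^0 * E x)) := (hint 0).const_mul _
  rw [integral_sub ha (hint 1), integral_const_mul] at hzero
  have h2 : c * F 0 c - F 1 c = 0 := hzero
  linear_combination -h2

lemma F_eq (n : ℕ) (c : ℂ) :
    F n c = (2*(π:ℂ))^(1/2 : ℂ) * Complex.exp (c^2/2) * (Hp n).eval c := by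
  induction n using Nat.twoStepInduction with
  | zero => rw [F_zero]; simp [Hp]
  | one => rw [ibp0, F_zero]; simp [Hp]; ring
  | more n ih1 ih2 =>
    rw [ibp, ih1, ih2]
    have : (Hp (n+2)).eval c = c * (Hp (n+1)).eval c + ((n:ℂ)+1) * (Hp n).eval c := by
      have := Hp_eval_succ (n+1) c
      rw [Nat.add_sub_cancel] at this
      push_cast at this
      exact this
    rw [this]
    ring



end Hecke16

open Hecke16

/-- The classical Hecke formula: for a harmonic polynomial `q` on a Euclidean
space `F = ℝ^N` (harmonicity expressed as `Σ_k ∂_k² q = 0`),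
`∫_F e^{i⟨ξ,η⟩} e^{-½⟨ξ,ξ⟩} q(ξ) dξ = (2π)^{N/2} e^{-½⟨η,η⟩} q(iη)`. -/
theorem stmt16 (N : ℕ) (P : MvPolynomial (Fin N) ℝ)
    (hharm : ∑ k : Fin N, MvPolynomial.pderiv k (MvPolynomial.pderiv k P) = 0) :
    ∀ η : EuclideanSpace ℝ (Fin N),
      (∫ ξ : EuclideanSpace ℝ (Fin N),
          Complex.exp ((⟪ξ, η⟫ : ℝ) * Complex.I) *
            (Real.exp (-(1 / 2) * ⟪ξ, ξ⟫) : ℂ) *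
            ((MvPolynomial.eval (fun k => ξ k) P : ℝ) : ℂ))
        = (((2 * Real.pi) ^ ((N : ℝ) / 2) * Real.exp (-(1 / 2) * ⟪η, η⟫) : ℝ) : ℂ) *
            MvPolynomial.eval (fun k => Complex.I * ((η k : ℝ) : ℂ))
              (P.map (algebraMap ℝ ℂ)) := by
  classical
  intro η
  set Q : MvPolynomial (Fin N) ℂ := P.map (algebraMap ℝ ℂ) with hQ
  set c : Fin N → ℂ := fun k => Complex.I * ((η k : ℝ) : ℂ) with hc
  -- harmonicity of Q
  have hlapQ : lap Q = 0 := by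
    unfold lap
    rw [hQ]
    have h1 : ∀ k : Fin N, MvPolynomial.pderiv k (MvPolynomial.pderiv k (P.map (algebraMap ℝ ℂ)))
        = (MvPolynomial.pderiv k (MvPolynomial.pderiv k P)).map (algebraMap ℝ ℂ) := by
      intro k
      rw [MvPolynomial.pderiv_map, MvPolynomial.pderiv_map]
    rw [Finset.sum_congr rfl (fun k _ => h1 k),
      ← map_sum (MvPolynomial.map (algebraMap ℝ ℂ)), hharm, map_zero]
  -- cast of evaluation
  have hcast : ∀ x : Fin N → ℝ, ((MvPolynomial.eval x P : ℝ) : ℂ)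
      = MvPolynomial.eval (fun k => ((x k : ℝ) : ℂ)) Q := by
    intro x
    rw [hQ, MvPolynomial.eval_map]
    have h2 := MvPolynomial.eval₂_comp_left Complex.ofRealHom (RingHom.id ℝ) x P
    have h3 : MvPolynomial.eval x P = MvPolynomial.eval₂ (RingHom.id ℝ) x P := rfl
    rw [h3]
    rw [show ((MvPolynomial.eval₂ (RingHom.id ℝ) x P : ℝ) : ℂ)
        = Complex.ofRealHom (MvPolynomial.eval₂ (RingHom.id ℝ) x P) from rfl, h2]
    apply MvPolynomial.eval₂_congr <;> intros <;> simp
  -- pointwise rewriting of the integrand over Euclidean space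
  have hpt : ∀ ξ : EuclideanSpace ℝ (Fin N),
      Complex.exp ((⟪ξ, η⟫ : ℝ) * Complex.I) *
          (Real.exp (-(1 / 2) * ⟪ξ, ξ⟫) : ℂ) *
          ((MvPolynomial.eval (fun k => ξ k) P : ℝ) : ℂ)
        = ∑ α ∈ Q.support, Q.coeff α *
            ∏ k, ((ξ k : ℂ)^(α k) *
              Complex.exp (-(1/2)*(ξ k : ℂ)^2 + c k * (ξ k : ℂ))) := by
    intro ξ
    have hinn1 : (⟪ξ, η⟫ : ℝ) = ∑ k, ξ k * η k := by
      rw [PiLp.inner_apply]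
      exact Finset.sum_congr rfl fun k _ => by rw [real_inner_eq_re_inner]; simp [mul_comm]
    have hinn2 : (⟪ξ, ξ⟫ : ℝ) = ∑ k, ξ k * ξ k := by
      rw [PiLp.inner_apply]
      exact Finset.sum_congr rfl fun k _ => by rw [real_inner_eq_re_inner]; simp [sq]
    have hexp : Complex.exp ((⟪ξ, η⟫ : ℝ) * Complex.I) *
        (Real.exp (-(1 / 2) * ⟪ξ, ξ⟫) : ℂ)
        = ∏ k, Complex.exp (-(1/2)*(ξ k : ℂ)^2 + c k * (ξ k : ℂ)) := by
      rw [Complex.ofReal_exp, ← Complex.exp_add, ← Complex.exp_sum]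
      congr 1
      rw [hinn1, hinn2]
      push_cast
      rw [Finset.sum_mul, Finset.mul_sum, ← Finset.sum_add_distrib]
      exact Finset.sum_congr rfl fun k _ => by rw [hc]; push_cast; ring
    rw [hcast, hexp, MvPolynomial.eval_eq', Finset.mul_sum]
    exact Finset.sum_congr rfl fun α _ => by
      rw [Finset.prod_mul_distrib]
      ring
  simp_rw [hpt]
  -- transfer the integral to the product measure
  have hpres := (EuclideanSpace.volume_preserving_symm_measurableEquiv_toLp (Fin N)).symm
  rw [← hpres.integral_comp (MeasurableEquiv.measurableEmbedding _)]
  have hcoord : ∀ (x : Fin N → ℝ) (k : Fin N),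
      (((MeasurableEquiv.toLp 2 (Fin N → ℝ)).symm.symm x : EuclideanSpace ℝ (Fin N))) k = x k := by
    intro x k
    rfl
  simp_rw [hcoord]
  -- integrate term by term
  have hintterm : ∀ α : Fin N →₀ ℕ, Integrable (fun x : Fin N → ℝ =>
      Q.coeff α * ∏ k, ((x k : ℂ)^(α k) *
        Complex.exp (-(1/2)*(x k : ℂ)^2 + c k * (x k : ℂ)))) := by
    intro α
    exact (Integrable.fintype_prod (f := fun k (t : ℝ) =>
      (t:ℂ)^(α k) * Complex.exp (-(1/2)*(t:ℂ)^2 + c k * (t:ℂ)))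
      (fun k => integrable_pow_gauss (α k) (c k))).const_mul _
  rw [integral_finset_sum _ (fun α _ => hintterm α)]
  have hterm : ∀ α : Fin N →₀ ℕ, (∫ x : Fin N → ℝ,
      Q.coeff α * ∏ k, ((x k : ℂ)^(α k) *
        Complex.exp (-(1/2)*(x k : ℂ)^2 + c k * (x k : ℂ))))
      = Q.coeff α * ((∏ k, ((2*(Real.pi:ℂ))^(1/2 : ℂ) * Complex.exp ((c k)^2/2))) *
          ∏ k, (Hp (α k)).eval (c k)) := by
    intro α
    rw [integral_const_mul, MeasureTheory.integral_fintype_prod_volume_eq_prod (ι := Fin N)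
      (f := fun k (t : ℝ) => (t:ℂ)^(α k) * Complex.exp (-(1/2)*(t:ℂ)^2 + c k * (t:ℂ)))]
    congr 1
    have : ∀ k : Fin N, (∫ t : ℝ, (t:ℂ)^(α k) *
        Complex.exp (-(1/2)*(t:ℂ)^2 + c k * (t:ℂ))) = F (α k) (c k) := fun k => rfl
    rw [Finset.prod_congr rfl (fun k _ => this k),
      Finset.prod_congr rfl (fun k _ => F_eq (α k) (c k)), ← Finset.prod_mul_distrib]
  rw [Finset.sum_congr rfl (fun α _ => hterm α)]
  have hTE : ∑ α ∈ Q.support, Q.coeff α *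
      ((∏ k, ((2*(Real.pi:ℂ))^(1/2 : ℂ) * Complex.exp ((c k)^2/2))) *
        ∏ k, (Hp (α k)).eval (c k))
      = (∏ k, ((2*(Real.pi:ℂ))^(1/2 : ℂ) * Complex.exp ((c k)^2/2))) * TE c Q := by
    rw [TE, Finset.mul_sum]
    exact Finset.sum_congr rfl fun α _ => by ring
  rw [hTE, TE_eq_eval c Q hlapQ]
  congr 1
  -- the constant factor
  have hinn3 : (⟪η, η⟫ : ℝ) = ∑ k, η k * η k := by
    rw [PiLp.inner_apply]
    exact Finset.sum_congr rfl fun k _ => by rw [real_inner_eq_re_inner]; simp [sq]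
  rw [Finset.prod_mul_distrib, Finset.prod_const, ← Complex.exp_sum]
  have hsum : ∑ k, (c k)^2/2 = ((-(1/2) * ⟪η, η⟫ : ℝ) : ℂ) := by
    rw [hinn3]
    push_cast
    rw [Finset.mul_sum]
    exact Finset.sum_congr rfl fun k _ => by
      rw [hc]
      have : Complex.I^2 = -1 := Complex.I_sq
      push_cast
      ring_nf
      rw [Complex.I_sq]
      ring
  rw [hsum, ← Complex.ofReal_exp]
  have hpow : ((2*(Real.pi:ℂ))^(1/2 : ℂ))^((Finset.univ : Finset (Fin N)).card)
      = (((2 * Real.pi) ^ ((N : ℝ) / 2) : ℝ) : ℂ) := by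
    rw [Finset.card_univ, Fintype.card_fin]
    have h2pi : (0:ℝ) ≤ 2 * Real.pi := by positivity
    rw [show (2*(Real.pi:ℂ)) = (((2 * Real.pi : ℝ)) : ℂ) by push_cast; ring]
    rw [show ((1/2 : ℂ)) = (((1/2 : ℝ)) : ℂ) by push_cast; ring]
    rw [← Complex.ofReal_cpow h2pi, ← Complex.ofReal_pow]
    congr 1
    rw [← Real.rpow_natCast ((2*Real.pi) ^ (1/2 : ℝ)) N, ← Real.rpow_mul h2pi]
    congr 1
    ring
  rw [hpow, ← Complex.ofReal_mul]
end
end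

section
/- In the rank-2 Jordan algebra J_n = ℝ ⊕ ℝ^{n−1} (n ≥ 4) with the CSOI c = (c₁, c₂), c₁ = (½, ½, 0,…,0), c₂ = (½, −½, 0,…,0), a polynomial q on J is c-homogeneous of multidegree (p₁,p₂) if and only if, in the adapted coordinates (y₁, y₂, y') with y₁ = s + x₁, y₂ = s − x₁, y_j = √2 x_{j−1}, it has the form q(y) = Σ_{j=0}^{min(p₁,p₂)} a_j y₁^{p₁−j} y₂^{p₂−j} |y'|^{2j} for some coefficients a_j ∈ ℂ. -/
open Polynomial in
lemma evAeval17 {M : ℕ} (P : MvPolynomial (Fin 2 ⊕ Fin M) ℂ)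
    (g : Fin 2 ⊕ Fin M → Polynomial ℂ) (t : ℂ) :
    Polynomial.eval t (MvPolynomial.aeval g P)
      = MvPolynomial.eval (fun v => Polynomial.eval t (g v)) P := by
  have h := MvPolynomial.comp_aeval_apply (R := ℂ) (φ := Polynomial.aeval t) (f := g) P
  simpa using h

open Matrix in
lemma dotOrtho17 {M : ℕ} (m : Matrix (Fin M) (Fin M) ℝ)
    (h : m.transpose * m = 1) (v : Fin M → ℝ) :
    ∑ k, (m.mulVec v k) ^ 2 = ∑ k, v k ^ 2 := by
  have h1 : (m.mulVec v) ⬝ᵥ (m.mulVec v) = v ⬝ᵥ v := by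
    rw [Matrix.dotProduct_mulVec, ← Matrix.mulVec_transpose,
      Matrix.mulVec_mulVec, h, Matrix.one_mulVec]
  simpa [dotProduct, pow_two] using h1

lemma sumSplit17 (g : ℕ → ℂ) : ∀ M : ℕ,
    ∑ k ∈ Finset.range (2 * M), g k = ∑ j ∈ Finset.range M, (g (2 * j) + g (2 * j + 1)) := by
  intro M
  induction M with
  | zero => simp
  | succ M ih =>
    have : 2 * (M + 1) = (2 * M + 1) + 1 := by ring
    rw [this, Finset.sum_range_succ, Finset.sum_range_succ, ih, Finset.sum_range_succ]
    ring

open Matrix in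
lemma existsRot17 {M : ℕ} (hM : 2 ≤ M) (v : Fin M → ℝ) :
    ∃ m : Matrix (Fin M) (Fin M) ℝ, m.transpose * m = 1 ∧ m.det = 1 ∧
      m.mulVec (fun k => if k = (⟨0, by omega⟩ : Fin M) then Real.sqrt (∑ k, v k ^ 2) else 0) = v := by
  set i0 : Fin M := ⟨0, by omega⟩ with hi0
  set i1 : Fin M := ⟨1, by omega⟩ with hi1
  have hne : i1 ≠ i0 := by simp [hi0, hi1, Fin.ext_iff]
  set r : ℝ := Real.sqrt (∑ k, v k ^ 2) with hr
  by_cases hv : v = 0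
  · refine ⟨1, by simp, by simp, ?_⟩
    have : r = 0 := by simp [hr, hv]
    funext k
    simp [Matrix.one_mulVec, this, hv]
  · -- v ≠ 0
    have hV : (0:ℝ) < ∑ k, v k ^ 2 := by
      rcases Function.ne_iff.mp hv with ⟨k, hk⟩
      have : (0:ℝ) < v k ^ 2 := sq_pos_of_ne_zero hk
      exact lt_of_lt_of_le this (Finset.single_le_sum (f := fun k => v k ^ 2)
        (fun i _ => sq_nonneg _) (Finset.mem_univ k))
    have hrpos : 0 < r := Real.sqrt_pos.mpr hV
    -- the unit vector u in EuclideanSpace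
    set V : EuclideanSpace ℝ (Fin M) := WithLp.toLp 2 v with hVdef
    have hnormV : ‖V‖ = r := by
      rw [EuclideanSpace.norm_eq]
      congr 1
      refine Finset.sum_congr rfl fun k _ => ?_
      simp [hVdef, Real.norm_eq_abs, sq_abs]
    set u : EuclideanSpace ℝ (Fin M) := r⁻¹ • V with hu
    have hnormu : ‖u‖ = 1 := by
      rw [hu, norm_smul, hnormV]
      simp [abs_of_pos hrpos, inv_mul_cancel₀ hrpos.ne']
    -- extend to an orthonormal basis with b i0 = u
    have hcard : Module.finrank ℝ (EuclideanSpace ℝ (Fin M)) = Fintype.card (Fin M) := by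
      simp
    have horth : Orthonormal ℝ (({i0} : Set (Fin M)).restrict (fun _ => u)) := by
      constructor
      · intro i; exact hnormu
      · intro i j hij
        exact absurd (Subsingleton.elim i j) hij
    obtain ⟨b, hb⟩ := Orthonormal.exists_orthonormalBasis_extension_of_card_eq
      (𝕜 := ℝ) hcard horth
    have hb0 : b i0 = u := hb i0 (by simp)
    -- the matrix with columns b j
    set m0 : Matrix (Fin M) (Fin M) ℝ := fun i j => b j i with hm0
    have hm0o : m0.transpose * m0 = 1 := by
      ext i j
      have := orthonormal_iff_ite.mp b.orthonormal i j
      rw [Matrix.mul_apply]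
      simp only [Matrix.transpose_apply, hm0]
      rw [Matrix.one_apply]
      rw [← this]
      simp [PiLp.inner_apply, RCLike.inner_apply, mul_comm, Matrix.transpose_apply]
      exact Finset.sum_congr rfl fun x _ => mul_comm _ _
    have hmv0 : m0.mulVec (fun k => if k = i0 then r else 0) = v := by
      funext k
      rw [Matrix.mulVec]
      simp only [dotProduct]
      rw [Finset.sum_eq_single i0]
      · simp [hm0, hb0, hu]
        field_simp
        simp [hVdef]
      · intro b' _ hb'; simp [hb']
      · simp
    have hdet2 : m0.det = 1 ∨ m0.det = -1 := by
      have : m0.det * m0.det = 1 := by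
        have := congrArg Matrix.det hm0o
        rwa [Matrix.det_mul, Matrix.det_transpose, Matrix.det_one] at this
      exact mul_self_eq_one_iff.mp this
    rcases hdet2 with hdet | hdet
    · exact ⟨m0, hm0o, hdet, hmv0⟩
    · -- fix determinant with a diagonal flip at i1
      set d : Fin M → ℝ := fun k => if k = i1 then -1 else 1 with hd
      set D : Matrix (Fin M) (Fin M) ℝ := Matrix.diagonal d with hD
      have hDo : D.transpose * D = 1 := by
        rw [hD, Matrix.diagonal_transpose, Matrix.diagonal_mul_diagonal]
        have hdd : d * d = 1 := by
          funext k
          by_cases hk : k = i1 <;> simp [hd, hk]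
        have : (fun i => d i * d i) = d * d := rfl
        rw [this, hdd]
        exact Matrix.diagonal_one
      have hDdet : D.det = -1 := by
        rw [hD, Matrix.det_diagonal, hd]
        rw [Finset.prod_ite_eq' Finset.univ i1 (fun _ => (-1:ℝ))]
        simp
      refine ⟨m0 * D, ?_, ?_, ?_⟩
      · rw [Matrix.transpose_mul, Matrix.mul_assoc, ← Matrix.mul_assoc m0.transpose, hm0o,
          Matrix.one_mul, hDo]
      · rw [Matrix.det_mul, hdet, hDdet]; ring
      · rw [← Matrix.mulVec_mulVec]
        have : D.mulVec (fun k => if k = i0 then r else 0) = (fun k => if k = i0 then r else 0) := by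
          funext k
          rw [Matrix.mulVec_diagonal]
          by_cases hk : k = i1
          · simp [hk, hne]
          · simp [hd, hk]
        rw [this, hmv0]


/-- Evaluation of a (complex) polynomial in the adapted coordinates
`(y₁, y₂, y')` of the rank-2 Jordan algebra `J_n`. -/
noncomputable def ev17 {n : ℕ} (P : MvPolynomial (Fin 2 ⊕ Fin (n - 2)) ℂ)
    (y₁ y₂ : ℝ) (y' : Fin (n - 2) → ℝ) : ℂ :=
  MvPolynomial.eval (Sum.elim ![(y₁ : ℂ), (y₂ : ℂ)] (fun k => ((y' k : ℝ) : ℂ))) P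

lemma evEq17 {n : ℕ} (P : MvPolynomial (Fin 2 ⊕ Fin (n - 2)) ℂ)
    (w : Fin 2 ⊕ Fin (n - 2) → ℂ) (y₁ y₂ : ℝ) (y' : Fin (n - 2) → ℝ)
    (h0 : w (Sum.inl 0) = (y₁ : ℂ)) (h1 : w (Sum.inl 1) = (y₂ : ℂ))
    (h2 : ∀ k, w (Sum.inr k) = (y' k : ℂ)) :
    MvPolynomial.eval w P = ev17 P y₁ y₂ y' := by
  unfold ev17
  have hw : w = Sum.elim ![(y₁ : ℂ), (y₂ : ℂ)] (fun k => ((y' k : ℝ) : ℂ)) := by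
    funext v
    rcases v with a | k
    · fin_cases a <;> simpa
    · simpa using h2 k
  rw [hw]

/-- In `J_n` (`n ≥ 4`) with the CSOI `(c₁,c₂)`, a polynomial `q` is
`c`-homogeneous of multidegree `(p₁,p₂)` — i.e. invariant under `SO(n-2)`
acting on `y'` and satisfying the scaling law
`q(λ₁y₁, λ₂y₂, √(λ₁λ₂) y') = λ₁^{p₁} λ₂^{p₂} q(y)` for `λ₁, λ₂ > 0` — iff
`q(y) = Σ_{j=0}^{min(p₁,p₂)} a_j y₁^{p₁-j} y₂^{p₂-j} |y'|^{2j}`. -/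
theorem stmt17 (n : ℕ) (hn : 4 ≤ n) (p₁ p₂ : ℕ)
    (P : MvPolynomial (Fin 2 ⊕ Fin (n - 2)) ℂ) :
    ((∀ l₁ l₂ : ℝ, 0 < l₁ → 0 < l₂ → ∀ (y₁ y₂ : ℝ) (y' : Fin (n - 2) → ℝ),
        ev17 P (l₁ * y₁) (l₂ * y₂) (fun k => Real.sqrt (l₁ * l₂) * y' k)
          = (l₁ : ℂ) ^ p₁ * (l₂ : ℂ) ^ p₂ * ev17 P y₁ y₂ y') ∧
     (∀ m : Matrix (Fin (n - 2)) (Fin (n - 2)) ℝ,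
        m.transpose * m = 1 → m.det = 1 →
        ∀ (y₁ y₂ : ℝ) (y' : Fin (n - 2) → ℝ),
          ev17 P y₁ y₂ (m.mulVec y') = ev17 P y₁ y₂ y'))
    ↔ ∃ a : ℕ → ℂ, ∀ (y₁ y₂ : ℝ) (y' : Fin (n - 2) → ℝ),
        ev17 P y₁ y₂ y'
          = ∑ j ∈ Finset.range (min p₁ p₂ + 1),
              a j * (y₁ : ℂ) ^ (p₁ - j) * (y₂ : ℂ) ^ (p₂ - j) *
                (((∑ k, (y' k) ^ 2 : ℝ)) : ℂ) ^ j := by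
  have h2 : 2 ≤ n - 2 := by omega
  have hi0lt : 0 < n - 2 := by omega
  constructor
  · rintro ⟨hsc, hrot⟩
    -- Step A: radial invariance
    have hrad : ∀ (y₁ y₂ : ℝ) (y' : Fin (n - 2) → ℝ),
        ev17 P y₁ y₂ y' = ev17 P y₁ y₂
          (fun k => if k = (⟨0, hi0lt⟩ : Fin (n - 2)) then Real.sqrt (∑ k, y' k ^ 2) else 0) := by
      intro y₁ y₂ y'
      obtain ⟨m, hmo, hmd, hmv⟩ := existsRot17 h2 y'
      rw [← hrot m hmo hmd y₁ y₂
        (fun k => if k = (⟨0, hi0lt⟩ : Fin (n - 2)) then Real.sqrt (∑ k, y' k ^ 2) else 0), hmv]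
    -- sum of squares of the axis vector
    have hsum_e0 : ∀ t : ℝ,
        ∑ k, (if k = (⟨0, hi0lt⟩ : Fin (n - 2)) then t else 0) ^ 2 = t ^ 2 := by
      intro t
      calc ∑ k, (if k = (⟨0, hi0lt⟩ : Fin (n - 2)) then t else 0) ^ 2
          = ∑ k, (if k = (⟨0, hi0lt⟩ : Fin (n - 2)) then t ^ 2 else 0) := by
            refine Finset.sum_congr rfl fun k _ => ?_
            split <;> simp
        _ = t ^ 2 := by simp
    have hrad1 : ∀ (y₁ y₂ t : ℝ),
        ev17 P y₁ y₂ (fun k => if k = (⟨0, hi0lt⟩ : Fin (n - 2)) then t else 0)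
          = ev17 P y₁ y₂ (fun k => if k = (⟨0, hi0lt⟩ : Fin (n - 2)) then |t| else 0) := by
      intro y₁ y₂ t
      have h := hrad y₁ y₂ (fun k => if k = (⟨0, hi0lt⟩ : Fin (n - 2)) then t else 0)
      rw [h]
      simp only [hsum_e0, Real.sqrt_sq_eq_abs]
    -- Step B: the one-variable polynomial Qh
    set Qh : Polynomial ℂ := MvPolynomial.aeval
      (Sum.elim ![Polynomial.C 1, Polynomial.C 1]
        (fun k => if k = (⟨0, hi0lt⟩ : Fin (n - 2)) then Polynomial.X else Polynomial.C 0)) P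
      with hQhdef
    have hQh : ∀ t : ℝ, Polynomial.eval (t : ℂ) Qh
        = ev17 P 1 1 (fun k => if k = (⟨0, hi0lt⟩ : Fin (n - 2)) then t else 0) := by
      intro t
      rw [hQhdef, evAeval17]
      refine evEq17 P _ 1 1 _ (by simp) (by simp) fun k => ?_
      by_cases hk : k = (⟨0, hi0lt⟩ : Fin (n - 2)) <;> simp [hk]
    set N : ℕ := Qh.natDegree with hN
    set c : ℕ → ℂ := fun k => Qh.coeff k with hc
    have hEvalSum : ∀ t : ℂ, Polynomial.eval t Qh = ∑ k ∈ Finset.range (N + 1), c k * t ^ k := by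
      intro t
      exact Polynomial.eval_eq_sum_range (p := Qh) t
    have hcN : ∀ k, N < k → c k = 0 := fun k hk =>
      Polynomial.coeff_eq_zero_of_natDegree_lt hk
    -- evenness
    have hEven : ∀ t : ℝ, Polynomial.eval ((-t : ℝ) : ℂ) Qh = Polynomial.eval ((t : ℝ) : ℂ) Qh := by
      intro t
      rw [hQh, hQh, hrad1 1 1 (-t), hrad1 1 1 t, abs_neg]
    have hoddc : ∀ k, Odd k → c k = 0 := by
      have hR0 : (∑ k ∈ Finset.range (N + 1),
          Polynomial.C (c k * ((-1) ^ k - 1)) * Polynomial.X ^ k) = (0 : Polynomial ℂ) := by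
        apply Polynomial.eq_of_infinite_eval_eq
        apply Set.Infinite.mono (s := Set.range ((↑) : ℝ → ℂ))
        · rintro x ⟨t, rfl⟩
          have h1 := hEven t
          rw [hEvalSum, hEvalSum] at h1
          simp only [Set.mem_setOf_eq, Polynomial.eval_finset_sum, Polynomial.eval_mul,
            Polynomial.eval_C, Polynomial.eval_pow, Polynomial.eval_X, Polynomial.eval_zero]
          have expand : ∀ k : ℕ, c k * ((-1) ^ k - 1) * (t : ℂ) ^ k
              = c k * (((-t : ℝ) : ℂ)) ^ k - c k * (t : ℂ) ^ k := by
            intro k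
            push_cast
            rw [neg_pow]
            ring
          rw [Finset.sum_congr rfl fun k _ => expand k, Finset.sum_sub_distrib, ← h1]
          ring
        · exact Set.infinite_range_of_injective Complex.ofReal_injective
      intro k hk
      by_cases hkN : k ≤ N
      · have hco := congrArg (fun q => Polynomial.coeff q k) hR0
        simp only [Polynomial.finset_sum_coeff, Polynomial.coeff_C_mul, Polynomial.coeff_X_pow,
          Polynomial.coeff_zero] at hco
        rw [Finset.sum_eq_single_of_mem k (Finset.mem_range.mpr (by omega))] at hco
        · simp only [if_pos rfl, mul_one] at hco
          have hm1 : ((-1 : ℂ)) ^ k = -1 := hk.neg_one_pow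
          rw [hm1] at hco
          simp only [if_true, mul_one] at hco
          have : c k * (-2) = 0 := by rw [← hco]; ring
          have h2 : (-2 : ℂ) ≠ 0 := by norm_num
          exact (mul_eq_zero.mp this).resolve_right h2
        · intro b _ hb
          simp [if_neg (Ne.symm hb)]
      · exact hcN k (by omega)
    have heven_sum : ∀ t : ℝ, Polynomial.eval ((t : ℝ) : ℂ) Qh
        = ∑ j ∈ Finset.range (N + 1), c (2 * j) * ((t : ℂ)) ^ (2 * j) := by
      intro t
      rw [hEvalSum]
      have hext : ∑ k ∈ Finset.range (N + 1), c k * (t : ℂ) ^ k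
          = ∑ k ∈ Finset.range (2 * (N + 1)), c k * (t : ℂ) ^ k := by
        apply Finset.sum_subset (Finset.range_subset_range.mpr (by omega))
        intro k _ hk
        rw [hcN k (by simp at hk; omega)]
        ring
      rw [hext, sumSplit17]
      refine Finset.sum_congr rfl fun j _ => ?_
      rw [hoddc (2 * j + 1) ⟨j, by ring⟩]
      ring
    -- Step D: formula on the positive cone
    have hpos : ∀ y₁ y₂ : ℝ, 0 < y₁ → 0 < y₂ → ∀ y' : Fin (n - 2) → ℝ,
        ev17 P y₁ y₂ y' = ∑ j ∈ Finset.range (N + 1),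
          c (2 * j) * ((y₁ : ℂ) ^ p₁ * (y₂ : ℂ) ^ p₂) *
            ((((∑ k, y' k ^ 2 : ℝ)) : ℂ) / ((y₁ : ℂ) * (y₂ : ℂ))) ^ j := by
      intro y₁ y₂ hy₁ hy₂ y'
      set u : ℝ := ∑ k, y' k ^ 2 with hu
      have hu0 : 0 ≤ u := Finset.sum_nonneg fun _ _ => sq_nonneg _
      set s : ℝ := Real.sqrt (y₁ * y₂) with hs
      have hs0 : 0 < s := Real.sqrt_pos.mpr (by positivity)
      have key := hsc y₁ y₂ hy₁ hy₂ 1 1 (fun k => y' k / s)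
      have harg : (fun k => Real.sqrt (y₁ * y₂) * (y' k / s)) = y' := by
        funext k
        rw [← hs]
        field_simp
      rw [mul_one, mul_one, harg] at key
      rw [key]
      set w : ℝ := u / (y₁ * y₂) with hw
      have hw0 : 0 ≤ w := by positivity
      have hwsum : ∑ k, (y' k / s) ^ 2 = w := by
        have hss : s ^ 2 = y₁ * y₂ := Real.sq_sqrt (by positivity)
        rw [hw, hu, ← hss, Finset.sum_div]
        exact Finset.sum_congr rfl fun k _ => div_pow _ _ _
      rw [hrad 1 1 (fun k => y' k / s)]
      simp only [hwsum]
      rw [← hQh (Real.sqrt w), heven_sum, Finset.mul_sum]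
      refine Finset.sum_congr rfl fun j _ => ?_
      have hcast : ((Real.sqrt w : ℝ) : ℂ) ^ (2 * j) = ((w : ℝ) : ℂ) ^ j := by
        rw [pow_mul]
        norm_cast
        rw [Real.sq_sqrt hw0]
      have hwc : ((w : ℝ) : ℂ) = ((u : ℝ) : ℂ) / ((y₁ : ℂ) * (y₂ : ℂ)) := by
        rw [hw]; push_cast; ring
      rw [hcast, hwc]
      ring
    -- unit axis vector
    have he1 : ∑ k, (if k = (⟨0, hi0lt⟩ : Fin (n - 2)) then (1:ℝ) else 0) ^ 2 = 1 := by
      rw [hsum_e0]; norm_num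
    -- Step E: degree bounds
    have hdb1 : ∀ j : ℕ, p₁ < j → c (2 * j) = 0 := by
      intro j hj
      by_cases hjN : j ≤ N
      · set Q1 : Polynomial ℂ := MvPolynomial.aeval
          (Sum.elim ![Polynomial.X, Polynomial.C 1]
            (fun k => if k = (⟨0, hi0lt⟩ : Fin (n - 2)) then Polynomial.C 1 else Polynomial.C 0)) P
          with hQ1def
        have hQ1 : ∀ t : ℝ, Polynomial.eval (t : ℂ) Q1
            = ev17 P t 1 (fun k => if k = (⟨0, hi0lt⟩ : Fin (n - 2)) then (1:ℝ) else 0) := by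
          intro t
          rw [hQ1def, evAeval17]
          refine evEq17 P _ t 1 _ (by simp) (by simp) fun k => ?_
          by_cases hk : k = (⟨0, hi0lt⟩ : Fin (n - 2)) <;> simp [hk]
        set S1 : Polynomial ℂ := ∑ j' ∈ Finset.range (N + 1),
          Polynomial.C (c (2 * j')) * Polynomial.X ^ (N + p₁ - j') with hS1def
        have hQS : Q1 * Polynomial.X ^ N = S1 := by
          apply Polynomial.eq_of_infinite_eval_eq
          apply Set.Infinite.mono (s := ((↑) : ℝ → ℂ) '' (Set.Ioi 0))
          · rintro x ⟨t, ht, rfl⟩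
            have ht0 : (t : ℂ) ≠ 0 := by
              simpa using (ne_of_gt ht)
            simp only [Set.mem_setOf_eq, Polynomial.eval_mul, Polynomial.eval_pow,
              Polynomial.eval_X]
            rw [hQ1 t, hpos t 1 ht one_pos _, hS1def]
            simp only [he1, Polynomial.eval_finset_sum, Polynomial.eval_mul, Polynomial.eval_C,
              Polynomial.eval_pow, Polynomial.eval_X]
            rw [Finset.sum_mul]
            refine Finset.sum_congr rfl fun j' hj' => ?_
            have hj'N : j' ≤ N := by
              simp only [Finset.mem_range] at hj'; omega
            have e1 : (t : ℂ) ^ (N + p₁ - j') = (t : ℂ) ^ (N + p₁) / (t : ℂ) ^ j' := by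
              rw [eq_div_iff (pow_ne_zero _ ht0), ← pow_add]
              congr 1
              omega
            rw [e1, pow_add]
            push_cast
            field_simp
            ring_nf
            simp [ht0]
          · exact ((Set.Ioi_infinite (0:ℝ)).image (Complex.ofReal_injective.injOn)).mono
              (le_refl _)
        have hL : (Q1 * Polynomial.X ^ N).coeff (N + p₁ - j) = 0 := by
          rw [Polynomial.coeff_mul_X_pow', if_neg (by omega)]
        have hRe : S1.coeff (N + p₁ - j) = c (2 * j) := by
          rw [hS1def, Polynomial.finset_sum_coeff]
          rw [Finset.sum_eq_single_of_mem j (Finset.mem_range.mpr (by omega))]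
          · rw [Polynomial.coeff_C_mul, Polynomial.coeff_X_pow, if_pos rfl, mul_one]
          · intro b hb hbj
            rw [Polynomial.coeff_C_mul, Polynomial.coeff_X_pow,
              if_neg (by simp only [Finset.mem_range] at hb; omega), mul_zero]
        rw [hQS, hRe] at hL
        exact hL
      · exact hcN _ (by omega)
    have hdb2 : ∀ j : ℕ, p₂ < j → c (2 * j) = 0 := by
      intro j hj
      by_cases hjN : j ≤ N
      · set Q2 : Polynomial ℂ := MvPolynomial.aeval
          (Sum.elim ![Polynomial.C 1, Polynomial.X]
            (fun k => if k = (⟨0, hi0lt⟩ : Fin (n - 2)) then Polynomial.C 1 else Polynomial.C 0)) P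
          with hQ2def
        have hQ2 : ∀ t : ℝ, Polynomial.eval (t : ℂ) Q2
            = ev17 P 1 t (fun k => if k = (⟨0, hi0lt⟩ : Fin (n - 2)) then (1:ℝ) else 0) := by
          intro t
          rw [hQ2def, evAeval17]
          refine evEq17 P _ 1 t _ (by simp) (by simp) fun k => ?_
          by_cases hk : k = (⟨0, hi0lt⟩ : Fin (n - 2)) <;> simp [hk]
        set S2 : Polynomial ℂ := ∑ j' ∈ Finset.range (N + 1),
          Polynomial.C (c (2 * j')) * Polynomial.X ^ (N + p₂ - j') with hS2def
        have hQS : Q2 * Polynomial.X ^ N = S2 := by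
          apply Polynomial.eq_of_infinite_eval_eq
          apply Set.Infinite.mono (s := ((↑) : ℝ → ℂ) '' (Set.Ioi 0))
          · rintro x ⟨t, ht, rfl⟩
            have ht0 : (t : ℂ) ≠ 0 := by
              simpa using (ne_of_gt ht)
            simp only [Set.mem_setOf_eq, Polynomial.eval_mul, Polynomial.eval_pow,
              Polynomial.eval_X]
            rw [hQ2 t, hpos 1 t one_pos ht _, hS2def]
            simp only [he1, Polynomial.eval_finset_sum, Polynomial.eval_mul, Polynomial.eval_C,
              Polynomial.eval_pow, Polynomial.eval_X]
            rw [Finset.sum_mul]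
            refine Finset.sum_congr rfl fun j' hj' => ?_
            have hj'N : j' ≤ N := by
              simp only [Finset.mem_range] at hj'; omega
            have e1 : (t : ℂ) ^ (N + p₂ - j') = (t : ℂ) ^ (N + p₂) / (t : ℂ) ^ j' := by
              rw [eq_div_iff (pow_ne_zero _ ht0), ← pow_add]
              congr 1
              omega
            rw [e1, pow_add]
            push_cast
            field_simp
            ring_nf
            simp [ht0]
          · exact ((Set.Ioi_infinite (0:ℝ)).image (Complex.ofReal_injective.injOn)).mono
              (le_refl _)
        have hL : (Q2 * Polynomial.X ^ N).coeff (N + p₂ - j) = 0 := by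
          rw [Polynomial.coeff_mul_X_pow', if_neg (by omega)]
        have hRe : S2.coeff (N + p₂ - j) = c (2 * j) := by
          rw [hS2def, Polynomial.finset_sum_coeff]
          rw [Finset.sum_eq_single_of_mem j (Finset.mem_range.mpr (by omega))]
          · rw [Polynomial.coeff_C_mul, Polynomial.coeff_X_pow, if_pos rfl, mul_one]
          · intro b hb hbj
            rw [Polynomial.coeff_C_mul, Polynomial.coeff_X_pow,
              if_neg (by simp only [Finset.mem_range] at hb; omega), mul_zero]
        rw [hQS, hRe] at hL
        exact hL
      · exact hcN _ (by omega)
    -- Step F: the formula on the positive cone, truncated sum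
    have hposfin : ∀ y₁ y₂ : ℝ, 0 < y₁ → 0 < y₂ → ∀ y' : Fin (n - 2) → ℝ,
        ev17 P y₁ y₂ y' = ∑ j ∈ Finset.range (min p₁ p₂ + 1),
          c (2 * j) * (y₁ : ℂ) ^ (p₁ - j) * (y₂ : ℂ) ^ (p₂ - j) *
            (((∑ k, y' k ^ 2 : ℝ)) : ℂ) ^ j := by
      intro y₁ y₂ hy₁ hy₂ y'
      rw [hpos y₁ y₂ hy₁ hy₂ y']
      set K : ℕ := max N (min p₁ p₂) + 1 with hK
      have hy₁0 : (y₁ : ℂ) ≠ 0 := by simpa using ne_of_gt hy₁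
      have hy₂0 : (y₂ : ℂ) ≠ 0 := by simpa using ne_of_gt hy₂
      have hLext : ∑ j ∈ Finset.range (N + 1),
          c (2 * j) * ((y₁ : ℂ) ^ p₁ * (y₂ : ℂ) ^ p₂) *
            ((((∑ k, y' k ^ 2 : ℝ)) : ℂ) / ((y₁ : ℂ) * (y₂ : ℂ))) ^ j
          = ∑ j ∈ Finset.range K,
          c (2 * j) * ((y₁ : ℂ) ^ p₁ * (y₂ : ℂ) ^ p₂) *
            ((((∑ k, y' k ^ 2 : ℝ)) : ℂ) / ((y₁ : ℂ) * (y₂ : ℂ))) ^ j := by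
        apply Finset.sum_subset (Finset.range_subset_range.mpr (by omega))
        intro k _ hk
        rw [hcN (2 * k) (by simp only [Finset.mem_range] at hk; omega)]
        ring
      have hRext : ∑ j ∈ Finset.range (min p₁ p₂ + 1),
          c (2 * j) * (y₁ : ℂ) ^ (p₁ - j) * (y₂ : ℂ) ^ (p₂ - j) *
            (((∑ k, y' k ^ 2 : ℝ)) : ℂ) ^ j
          = ∑ j ∈ Finset.range K,
          c (2 * j) * (y₁ : ℂ) ^ (p₁ - j) * (y₂ : ℂ) ^ (p₂ - j) *
            (((∑ k, y' k ^ 2 : ℝ)) : ℂ) ^ j := by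
        apply Finset.sum_subset (Finset.range_subset_range.mpr (by omega))
        intro k _ hk
        have : p₁ < k ∨ p₂ < k := by simp only [Finset.mem_range] at hk; omega
        rcases this with h | h
        · rw [hdb1 k h]; ring
        · rw [hdb2 k h]; ring
      rw [hLext, hRext]
      refine Finset.sum_congr rfl fun j _ => ?_
      by_cases hj : j ≤ min p₁ p₂
      · have hj1 : j ≤ p₁ := le_trans hj (min_le_left _ _)
        have hj2 : j ≤ p₂ := le_trans hj (min_le_right _ _)
        have e1 : (y₁ : ℂ) ^ (p₁ - j) * (y₁ : ℂ) ^ j = (y₁ : ℂ) ^ p₁ := by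
          rw [← pow_add]; congr 1; omega
        have e2 : (y₂ : ℂ) ^ (p₂ - j) * (y₂ : ℂ) ^ j = (y₂ : ℂ) ^ p₂ := by
          rw [← pow_add]; congr 1; omega
        rw [div_pow, mul_pow, ← e1, ← e2]
        field_simp
      · have : p₁ < j ∨ p₂ < j := by omega
        rcases this with h | h
        · rw [hdb1 j h]; ring
        · rw [hdb2 j h]; ring
    -- Step G: extend to all real y₁ (then y₂) by polynomial identity
    have hstep1 : ∀ (y₂ : ℝ), 0 < y₂ → ∀ (y' : Fin (n - 2) → ℝ) (y₁ : ℝ),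
        ev17 P y₁ y₂ y' = ∑ j ∈ Finset.range (min p₁ p₂ + 1),
          c (2 * j) * (y₁ : ℂ) ^ (p₁ - j) * (y₂ : ℂ) ^ (p₂ - j) *
            (((∑ k, y' k ^ 2 : ℝ)) : ℂ) ^ j := by
      intro y₂ hy₂ y'
      set A : Polynomial ℂ := MvPolynomial.aeval
        (Sum.elim ![Polynomial.X, Polynomial.C (y₂ : ℂ)]
          (fun k => Polynomial.C ((y' k : ℝ) : ℂ))) P with hAdef
      have hA : ∀ y₁ : ℝ, Polynomial.eval (y₁ : ℂ) A = ev17 P y₁ y₂ y' := by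
        intro y₁
        rw [hAdef, evAeval17]
        exact evEq17 P _ y₁ y₂ y' (by simp) (by simp) fun k => by simp
      set B : Polynomial ℂ := ∑ j ∈ Finset.range (min p₁ p₂ + 1),
        Polynomial.C (c (2 * j) * (y₂ : ℂ) ^ (p₂ - j) * (((∑ k, y' k ^ 2 : ℝ)) : ℂ) ^ j)
          * Polynomial.X ^ (p₁ - j) with hBdef
      have hB : ∀ t : ℂ, Polynomial.eval t B = ∑ j ∈ Finset.range (min p₁ p₂ + 1),
          c (2 * j) * t ^ (p₁ - j) * (y₂ : ℂ) ^ (p₂ - j) *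
            (((∑ k, y' k ^ 2 : ℝ)) : ℂ) ^ j := by
        intro t
        rw [hBdef]
        simp only [Polynomial.eval_finset_sum, Polynomial.eval_mul, Polynomial.eval_C,
          Polynomial.eval_pow, Polynomial.eval_X]
        exact Finset.sum_congr rfl fun j _ => by ring
      have hAB : A = B := by
        apply Polynomial.eq_of_infinite_eval_eq
        apply Set.Infinite.mono (s := ((↑) : ℝ → ℂ) '' (Set.Ioi 0))
        · rintro x ⟨t, ht, rfl⟩
          simp only [Set.mem_setOf_eq]
          rw [hA t, hB, hposfin t y₂ ht hy₂ y']
        · exact ((Set.Ioi_infinite (0:ℝ)).image (Complex.ofReal_injective.injOn)).mono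
            (le_refl _)
      intro y₁
      rw [← hA y₁, hAB, hB]
    have hstep2 : ∀ (y₁ : ℝ) (y' : Fin (n - 2) → ℝ) (y₂ : ℝ),
        ev17 P y₁ y₂ y' = ∑ j ∈ Finset.range (min p₁ p₂ + 1),
          c (2 * j) * (y₁ : ℂ) ^ (p₁ - j) * (y₂ : ℂ) ^ (p₂ - j) *
            (((∑ k, y' k ^ 2 : ℝ)) : ℂ) ^ j := by
      intro y₁ y'
      set A : Polynomial ℂ := MvPolynomial.aeval
        (Sum.elim ![Polynomial.C (y₁ : ℂ), Polynomial.X]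
          (fun k => Polynomial.C ((y' k : ℝ) : ℂ))) P with hAdef
      have hA : ∀ y₂ : ℝ, Polynomial.eval (y₂ : ℂ) A = ev17 P y₁ y₂ y' := by
        intro y₂
        rw [hAdef, evAeval17]
        exact evEq17 P _ y₁ y₂ y' (by simp) (by simp) fun k => by simp
      set B : Polynomial ℂ := ∑ j ∈ Finset.range (min p₁ p₂ + 1),
        Polynomial.C (c (2 * j) * (y₁ : ℂ) ^ (p₁ - j) * (((∑ k, y' k ^ 2 : ℝ)) : ℂ) ^ j)
          * Polynomial.X ^ (p₂ - j) with hBdef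
      have hB : ∀ t : ℂ, Polynomial.eval t B = ∑ j ∈ Finset.range (min p₁ p₂ + 1),
          c (2 * j) * (y₁ : ℂ) ^ (p₁ - j) * t ^ (p₂ - j) *
            (((∑ k, y' k ^ 2 : ℝ)) : ℂ) ^ j := by
        intro t
        rw [hBdef]
        simp only [Polynomial.eval_finset_sum, Polynomial.eval_mul, Polynomial.eval_C,
          Polynomial.eval_pow, Polynomial.eval_X]
        exact Finset.sum_congr rfl fun j _ => by ring
      have hAB : A = B := by
        apply Polynomial.eq_of_infinite_eval_eq
        apply Set.Infinite.mono (s := ((↑) : ℝ → ℂ) '' (Set.Ioi 0))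
        · rintro x ⟨t, ht, rfl⟩
          simp only [Set.mem_setOf_eq]
          rw [hA t, hB, hstep1 t ht y' y₁]
        · exact ((Set.Ioi_infinite (0:ℝ)).image (Complex.ofReal_injective.injOn)).mono
            (le_refl _)
      intro y₂
      rw [← hA y₂, hAB, hB]
    exact ⟨fun j => c (2 * j), fun y₁ y₂ y' => hstep2 y₁ y' y₂⟩
  · -- backward direction
    rintro ⟨a, ha⟩
    constructor
    · intro l₁ l₂ hl₁ hl₂ y₁ y₂ y'
      rw [ha, ha]
      have hll : (0:ℝ) ≤ l₁ * l₂ := by positivity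
      have hsum : ∑ k, (Real.sqrt (l₁ * l₂) * y' k) ^ 2 = (l₁ * l₂) * ∑ k, y' k ^ 2 := by
        rw [Finset.mul_sum]
        refine Finset.sum_congr rfl fun k _ => ?_
        rw [mul_pow, Real.sq_sqrt hll]
      rw [Finset.mul_sum]
      refine Finset.sum_congr rfl fun j hj => ?_
      have hj1 : j ≤ p₁ := by simp only [Finset.mem_range] at hj; omega
      have hj2 : j ≤ p₂ := by simp only [Finset.mem_range] at hj; omega
      simp only [hsum]
      have e1 : (l₁ : ℂ) ^ (p₁ - j) * (l₁ : ℂ) ^ j = (l₁ : ℂ) ^ p₁ := by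
        rw [← pow_add]; congr 1; omega
      have e2 : (l₂ : ℂ) ^ (p₂ - j) * (l₂ : ℂ) ^ j = (l₂ : ℂ) ^ p₂ := by
        rw [← pow_add]; congr 1; omega
      push_cast
      rw [← e1, ← e2]
      ring
    · intro m hmo hmd y₁ y₂ y'
      rw [ha, ha]
      have hsum := dotOrtho17 m hmo y'
      rw [hsum]
end
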